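/- arXiv:2207.02551 — 3 statements merged into one kernel-verified Lean document; each statement's English description precedes it below -/
import Mathlib

section
/- For any integer m≥2, any permutation π of {0,…,m−1}, constants c,c_i,c'∈Z_q (q even), the Boolean function g = (q/2)·Σ_{i=0}^{m−2} x_{π(i)}x_{π(i+1)} + Σ_{i=0}^{m−1} c_i x_i + c yields that the pair of length-2^m sequences (Ψ(g), Ψ(g + (q/2)x_{π(0)} + c')) is a Golay complementary pair, i.e., their aperiodic autocorrelation sums vanish at every nonzero shift. -/
open Finset Complex

/-- ω = exp(2πi/q). -/
noncomputable def omegaq (q : ℕ) : ℂ := Complex.exp (2 * Real.pi * Complex.I / q)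

/-- Aperiodic cross-correlation of two length-`N` complex sequences at shift `τ`. -/
noncomputable def acorr (N : ℕ) (x y : ℕ → ℂ) (τ : ℕ) : ℂ :=
  ∑ i ∈ Finset.range (N - τ), x i * (starRingEnd ℂ) (y (i + τ))

/-- `k`-th binary digit of `i`. -/
def bit (i k : ℕ) : ℕ := (i / 2 ^ k) % 2

lemma bit_lt_two (i k : ℕ) : bit i k < 2 := Nat.mod_lt _ (by norm_num)

lemma bit_eq_one_iff (i k : ℕ) : bit i k = 1 ↔ i.testBit k = true := by
  rw [Nat.testBit_eq_decide_div_mod_eq]; simp [bit]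

lemma bit_eq_ite (i k : ℕ) : bit i k = if i.testBit k then 1 else 0 := by
  have h := bit_lt_two i k
  have h1 := bit_eq_one_iff i k
  cases hb : i.testBit k <;> simp [hb] at h1 ⊢ <;> omega

lemma bit_xor_ne {k p : ℕ} (h : k ≠ p) (x : ℕ) : bit (x ^^^ 2 ^ p) k = bit x k := by
  simp [bit_eq_ite, Nat.testBit_xor, Nat.testBit_two_pow, (Ne.symm h)]

lemma bit_xor_eq (p x : ℕ) : (bit (x ^^^ 2 ^ p) p : ℤ) = 1 - (bit x p : ℤ) := by
  rw [bit_eq_ite, bit_eq_ite]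
  simp [Nat.testBit_xor, Nat.testBit_two_pow]
  cases hb : x.testBit p <;> simp [hb]

lemma xor_two_pow_key (p : ℕ) : ∀ x, (x ^^^ 2 ^ p) + 2 ^ (p + 1) * bit x p = x + 2 ^ p := by
  induction p with
  | zero =>
    intro x
    have hd : (x ^^^ 1) / 2 = x / 2 := by
      have := Nat.xor_div_two (a := x) (b := 1); simpa using this
    have hm : (x ^^^ 1) % 2 = 1 ↔ ¬(x % 2 = 1 ↔ (1 : ℕ) % 2 = 1) := Nat.xor_mod_two_eq_one
    have hm2 : (x ^^^ 1) % 2 = 1 - x % 2 := by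
      rcases Nat.mod_two_eq_zero_or_one (x ^^^ 1) with h | h <;>
        rcases Nat.mod_two_eq_zero_or_one x with h' | h' <;> simp [h, h'] at hm ⊢ <;> omega
    have h1 := Nat.div_add_mod (x ^^^ 1) 2
    have h2 := Nat.div_add_mod x 2
    have hb : bit x 0 = x % 2 := by simp [bit]
    show (x ^^^ 2 ^ 0) + 2 ^ 1 * bit x 0 = x + 2 ^ 0
    rw [pow_zero] at *
    rw [hb, pow_one]
    rw [hd] at h1
    clear hm hd hb
    generalize hA : x ^^^ 1 = A at hm2 h1 ⊢
    omega
  | succ p ih =>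
    intro x
    have hd : (x ^^^ 2 ^ (p + 1)) / 2 = (x / 2) ^^^ 2 ^ p := by
      have := Nat.xor_div_two (a := x) (b := 2 ^ (p + 1))
      rwa [show (2:ℕ) ^ (p+1) / 2 = 2 ^ p by rw [pow_succ]; omega] at this
    have hpe : (2:ℕ) ^ (p + 1) % 2 = 0 := by rw [pow_succ]; omega
    have hm : (x ^^^ 2 ^ (p+1)) % 2 = 1 ↔ ¬(x % 2 = 1 ↔ (2:ℕ) ^ (p+1) % 2 = 1) :=
      Nat.xor_mod_two_eq_one
    have hm2 : (x ^^^ 2 ^ (p+1)) % 2 = x % 2 := by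
      rcases Nat.mod_two_eq_zero_or_one (x ^^^ 2 ^ (p+1)) with h | h <;>
        rcases Nat.mod_two_eq_zero_or_one x with h' | h' <;> simp [h, h', hpe] at hm ⊢ <;> omega
    have hb : bit x (p + 1) = bit (x / 2) p := by
      simp [bit, Nat.div_div_eq_div_mul, pow_succ, pow_succ']
      ring_nf
    have h1 := Nat.div_add_mod (x ^^^ 2 ^ (p + 1)) 2
    have h2 := Nat.div_add_mod x 2
    have h3 := ih (x / 2)
    rw [hd] at h1
    rw [hb]
    rw [show (2:ℕ) ^ (p + 1 + 1) = 4 * 2 ^ p from by ring]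
    rw [show (2:ℕ) ^ (p + 1) = 2 * 2 ^ p from by ring] at h1 hm2 h3 ⊢
    clear hm hd hpe hb ih
    rw [show 2 * 2 ^ p * bit (x / 2) p = 2 * (2 ^ p * bit (x / 2) p) from by ring] at h3
    rw [show 4 * 2 ^ p * bit (x / 2) p = 4 * (2 ^ p * bit (x / 2) p) from by ring]
    generalize hA : x ^^^ 2 * 2 ^ p = A at hm2 h1 ⊢
    generalize hC : x / 2 ^^^ 2 ^ p = C at h1 h3
    generalize hu : 2 ^ p * bit (x / 2) p = u at h3 ⊢
    generalize hP : 2 ^ p = P at h3 ⊢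
    omega

lemma omegaq_ne_zero (q : ℕ) : omegaq q ≠ 0 := Complex.exp_ne_zero _

lemma omegaq_zpow_q {q : ℕ} (hq : q ≠ 0) : omegaq q ^ (q : ℤ) = 1 := by
  rw [zpow_natCast, omegaq, ← Complex.exp_nat_mul]
  rw [show (q:ℂ) * (2 * Real.pi * Complex.I / q) = 2 * Real.pi * Complex.I from
    mul_div_cancel₀ _ (Nat.cast_ne_zero.mpr hq)]
  exact Complex.exp_two_pi_mul_I

lemma omegaq_conj (q n : ℕ) : (starRingEnd ℂ) (omegaq q ^ n) = omegaq q ^ (-(n:ℤ)) := by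
  have hc : (starRingEnd ℂ) (omegaq q) = (omegaq q)⁻¹ := by
    rw [omegaq, ← Complex.exp_conj, ← Complex.exp_neg]
    congr 1
    simp [map_div₀, Complex.conj_I, map_ofNat]
    ring
  rw [map_pow, hc, inv_pow, zpow_neg, zpow_natCast]

lemma omegaq_half {q : ℕ} (hq : q ≠ 0) (hq2 : 2 ∣ q) :
    omegaq q ^ ((q / 2 : ℕ) : ℤ) = -1 := by
  obtain ⟨r, rfl⟩ := hq2
  have hr : r ≠ 0 := by rintro rfl; simp at hq
  rw [Nat.mul_div_cancel_left r (by norm_num), zpow_natCast, omegaq, ← Complex.exp_nat_mul]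
  rw [show (r:ℂ) * (2 * Real.pi * Complex.I / (↑(2 * r))) = Real.pi * Complex.I from by
    push_cast
    rw [show (r:ℂ) * (2 * ↑Real.pi * I / (2 * ↑r)) =
        ↑Real.pi * I * (2 * (r:ℂ) / (2 * (r:ℂ))) from by ring,
      div_self (mul_ne_zero two_ne_zero (Nat.cast_ne_zero.mpr hr)), mul_one]]
  exact Complex.exp_pi_mul_I

lemma omegaq_zpow_congr {q : ℕ} (hq : q ≠ 0) {x y : ℤ} (h : (q:ℤ) ∣ x - y) :
    omegaq q ^ x = omegaq q ^ y := by
  obtain ⟨k, hk⟩ := h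
  have hx : x = y + q * k := by linarith
  rw [hx, zpow_add₀ (omegaq_ne_zero q), zpow_mul, omegaq_zpow_q hq, one_zpow, mul_one]

lemma omegaq_mul_conj (q n n' : ℕ) :
    omegaq q ^ n * (starRingEnd ℂ) (omegaq q ^ n') = omegaq q ^ ((n : ℤ) - (n' : ℤ)) := by
  rw [omegaq_conj, ← zpow_natCast (omegaq q) n, ← zpow_add₀ (omegaq_ne_zero q),
    sub_eq_add_neg]

lemma gdiff (q m : ℕ) (π : ℕ → ℕ) (hπ : Set.BijOn π (Set.Iio m) (Set.Iio m))
    (c : ℕ) (cc : ℕ → ℕ) (g : ℕ → ℕ)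
    (hg : ∀ i, g i = q / 2 * ∑ k ∈ Finset.range (m - 1), bit i (π k) * bit i (π (k + 1))
        + ∑ k ∈ Finset.range m, cc k * bit i k + c)
    (w : ℕ) (hw : w + 1 < m) (x : ℕ) :
    (g (x ^^^ 2 ^ π w) : ℤ) = (g x : ℤ)
      + (1 - 2 * (bit x (π w) : ℤ)) *
        ((q / 2 : ℕ) * ((if w = 0 then 0 else (bit x (π (w - 1)) : ℤ)) + (bit x (π (w + 1)) : ℤ))
          + (cc (π w) : ℤ)) := by
  set p := π w with hp
  have hinj := hπ.injOn
  have hmem : ∀ u, u < m → π u ∈ Set.Iio m := fun u hu => hπ.mapsTo (by simpa using hu)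
  have hpm : p < m := by simpa using hmem w (by omega)
  have hne : ∀ u, u < m → u ≠ w → π u ≠ p := by
    intro u hu huw hcon
    exact huw (hinj (by simpa using hu) (by simp; omega) hcon)
  have hEq : ∀ u, u < m → u ≠ w → (bit (x ^^^ 2 ^ p) (π u) : ℤ) = (bit x (π u) : ℤ) := by
    intro u hu huw
    rw [bit_xor_ne (hne u hu huw)]
  -- quadratic part
  have hquad : ∑ k ∈ Finset.range (m - 1), ((bit (x ^^^ 2 ^ p) (π k) : ℤ) * (bit (x ^^^ 2 ^ p) (π (k + 1)) : ℤ))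
      = ∑ k ∈ Finset.range (m - 1), ((bit x (π k) : ℤ) * (bit x (π (k + 1)) : ℤ))
      + (1 - 2 * (bit x p : ℤ)) *
        ((if w = 0 then 0 else (bit x (π (w - 1)) : ℤ)) + (bit x (π (w + 1)) : ℤ)) := by
    have hkey : ∑ k ∈ Finset.range (m - 1),
        ((bit (x ^^^ 2 ^ p) (π k) : ℤ) * (bit (x ^^^ 2 ^ p) (π (k + 1)) : ℤ)
          - (bit x (π k) : ℤ) * (bit x (π (k + 1)) : ℤ))
        = (1 - 2 * (bit x p : ℤ)) *
          ((if w = 0 then 0 else (bit x (π (w - 1)) : ℤ)) + (bit x (π (w + 1)) : ℤ)) := by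
      rcases Nat.eq_zero_or_pos w with hw0 | hw1
      · subst hw0
        rw [if_pos rfl]
        rw [Finset.sum_eq_single_of_mem 0 (Finset.mem_range.mpr (by omega))]
        · rw [hEq 1 (by omega) (by omega)]
          rw [show (bit (x ^^^ 2 ^ p) (π 0) : ℤ) = 1 - (bit x (π 0) : ℤ) from by
            rw [hp]; exact bit_xor_eq (π 0) x]
          rw [← hp]
          ring
        · intro k hk hk0
          rw [hEq k (by simp at hk; omega) hk0, hEq (k + 1) (by simp at hk; omega) (by omega)]
          ring
      · rw [if_neg (by omega)]
        rw [← Finset.sum_subset (show ({w - 1, w} : Finset ℕ) ⊆ Finset.range (m - 1) from by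
            intro u hu; simp at hu ⊢; omega)
          (by
            intro k hk hknot
            simp at hk hknot
            rw [hEq k (by omega) (by omega), hEq (k + 1) (by omega) (by omega)]
            ring)]
        rw [Finset.sum_pair (show w - 1 ≠ w from by omega)]
        have hww : w - 1 + 1 = w := by omega
        rw [hww]
        rw [hEq (w - 1) (by omega) (by omega), hEq (w + 1) (by omega) (by omega)]
        rw [show (bit (x ^^^ 2 ^ p) (π w) : ℤ) = 1 - (bit x (π w) : ℤ) from by
          rw [hp]; exact bit_xor_eq (π w) x]
        rw [← hp]
        ring
    rw [← sub_eq_iff_eq_add', ← hkey, ← Finset.sum_sub_distrib]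
  -- linear part
  have hlin : ∑ k ∈ Finset.range m, (cc k : ℤ) * (bit (x ^^^ 2 ^ p) k : ℤ)
      = ∑ k ∈ Finset.range m, (cc k : ℤ) * (bit x k : ℤ)
      + (1 - 2 * (bit x p : ℤ)) * (cc p : ℤ) := by
    have hkey : ∑ k ∈ Finset.range m,
        ((cc k : ℤ) * (bit (x ^^^ 2 ^ p) k : ℤ) - (cc k : ℤ) * (bit x k : ℤ))
        = (1 - 2 * (bit x p : ℤ)) * (cc p : ℤ) := by
      rw [Finset.sum_eq_single_of_mem p (Finset.mem_range.mpr hpm)]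
      · rw [bit_xor_eq p x]
        ring
      · intro k hk hkp
        rw [bit_xor_ne hkp]
        ring
    rw [← sub_eq_iff_eq_add', ← hkey, ← Finset.sum_sub_distrib]
  have h1 := hg (x ^^^ 2 ^ p)
  have h2 := hg x
  have h1' : (g (x ^^^ 2 ^ p) : ℤ) = (q / 2 : ℕ) * ∑ k ∈ Finset.range (m - 1),
      ((bit (x ^^^ 2 ^ p) (π k) : ℤ) * (bit (x ^^^ 2 ^ p) (π (k + 1)) : ℤ))
      + ∑ k ∈ Finset.range m, (cc k : ℤ) * (bit (x ^^^ 2 ^ p) k : ℤ) + (c : ℤ) := by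
    rw [h1]; push_cast; ring
  have h2' : (g x : ℤ) = (q / 2 : ℕ) * ∑ k ∈ Finset.range (m - 1),
      ((bit x (π k) : ℤ) * (bit x (π (k + 1)) : ℤ))
      + ∑ k ∈ Finset.range m, (cc k : ℤ) * (bit x k : ℤ) + (c : ℤ) := by
    rw [h2]; push_cast; ring
  rw [h1', h2', hquad, hlin]
  ring

/-- index of the lowest (π-ordered) differing bit between `i` and `i + τ`. -/
noncomputable def Vmin (π : ℕ → ℕ) (τ i : ℕ) : ℕ :=
  sInf {v | bit i (π v) ≠ bit (i + τ) (π v)}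

/-- the standard GBF quadratic form gives a Golay complementary pair. -/
theorem stmt_1 (q m : ℕ) (hq : 2 ≤ q) (hq2 : 2 ∣ q) (hm : 2 ≤ m)
    (π : ℕ → ℕ) (hπ : Set.BijOn π (Set.Iio m) (Set.Iio m))
    (c c' : ℕ) (cc : ℕ → ℕ)
    (g : ℕ → ℕ)
    (hg : ∀ i, g i = q / 2 * ∑ k ∈ Finset.range (m - 1), bit i (π k) * bit i (π (k + 1))
        + ∑ k ∈ Finset.range m, cc k * bit i k + c)
    (a b : ℕ → ℂ)
    (ha : ∀ i, a i = omegaq q ^ g i)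
    (hb : ∀ i, b i = omegaq q ^ (g i + q / 2 * bit i (π 0) + c')) :
    ∀ τ : ℕ, 0 < τ → acorr (2 ^ m) a a τ + acorr (2 ^ m) b b τ = 0 := by
  intro τ htau
  by_cases hτN : 2 ^ m ≤ τ
  · unfold acorr
    rw [show 2 ^ m - τ = 0 from by omega]
    simp
  push_neg at hτN
  have hq0 : q ≠ 0 := by omega
  have hinj := hπ.injOn
  have hmem : ∀ u, u < m → π u < m := fun u hu => by
    have := hπ.mapsTo (show u ∈ Set.Iio m from by simpa using hu); simpa using this
  have hne2 : ∀ u w, u < m → w < m → u ≠ w → π u ≠ π w := by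
    intro u w hu hw huw hcon
    exact huw (hinj (by simpa using hu) (by simpa using hw) hcon)
  -- summand rewriting
  have hT : ∀ i : ℕ, a i * (starRingEnd ℂ) (a (i + τ)) + b i * (starRingEnd ℂ) (b (i + τ))
      = omegaq q ^ ((g i : ℤ) - (g (i + τ) : ℤ)) *
        (1 + omegaq q ^ (((q / 2 : ℕ) : ℤ) *
          ((bit i (π 0) : ℤ) - (bit (i + τ) (π 0) : ℤ)))) := by
    intro i
    rw [ha, ha, hb, hb, omegaq_mul_conj, omegaq_mul_conj]
    rw [show ((g i + q / 2 * bit i (π 0) + c' : ℕ) : ℤ)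
          - ((g (i + τ) + q / 2 * bit (i + τ) (π 0) + c' : ℕ) : ℤ)
        = ((g i : ℤ) - (g (i + τ) : ℤ))
          + ((q / 2 : ℕ) : ℤ) * ((bit i (π 0) : ℤ) - (bit (i + τ) (π 0) : ℤ)) from by
      push_cast; ring]
    rw [zpow_add₀ (omegaq_ne_zero q)]
    ring
  have hhalf : ∀ t : ℤ, t = 1 ∨ t = -1 → omegaq q ^ (((q / 2 : ℕ) : ℤ) * t) = -1 := by
    rintro t (rfl | rfl)
    · rw [mul_one, omegaq_half hq0 hq2]
    · rw [mul_neg_one, zpow_neg, omegaq_half hq0 hq2]; norm_num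
  unfold acorr
  rw [← Finset.sum_add_distrib]
  rw [← Finset.sum_filter_of_ne (p := fun i => bit i (π 0) = bit (i + τ) (π 0))
    (by
      intro i hi hfne
      by_contra hPd
      apply hfne
      rw [hT i]
      have h1 := bit_lt_two i (π 0)
      have h2 := bit_lt_two (i + τ) (π 0)
      have hs : (bit i (π 0) : ℤ) - (bit (i + τ) (π 0) : ℤ) = 1 ∨
          (bit i (π 0) : ℤ) - (bit (i + τ) (π 0) : ℤ) = -1 := by
        have : bit i (π 0) ≠ bit (i + τ) (π 0) := hPd
        omega
      rw [hhalf _ hs]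
      ring)]
  -- the main cancellation facts
  have main : ∀ i ∈ Finset.filter (fun i => bit i (π 0) = bit (i + τ) (π 0))
      (Finset.range (2 ^ m - τ)),
      (i ^^^ 2 ^ π (Vmin π τ i - 1)) ∈ Finset.filter
          (fun i => bit i (π 0) = bit (i + τ) (π 0)) (Finset.range (2 ^ m - τ))
      ∧ Vmin π τ (i ^^^ 2 ^ π (Vmin π τ i - 1)) = Vmin π τ i
      ∧ ((a i * (starRingEnd ℂ) (a (i + τ)) + b i * (starRingEnd ℂ) (b (i + τ)))
          + (a (i ^^^ 2 ^ π (Vmin π τ i - 1))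
              * (starRingEnd ℂ) (a ((i ^^^ 2 ^ π (Vmin π τ i - 1)) + τ))
            + b (i ^^^ 2 ^ π (Vmin π τ i - 1))
              * (starRingEnd ℂ) (b ((i ^^^ 2 ^ π (Vmin π τ i - 1)) + τ))) = 0)
      ∧ (i ^^^ 2 ^ π (Vmin π τ i - 1)) ≠ i := by
    intro i hi
    rw [Finset.mem_filter, Finset.mem_range] at hi
    obtain ⟨hiN, hP⟩ := hi
    have hjN : i + τ < 2 ^ m := by omega
    have hiN' : i < 2 ^ m := by omega
    -- a differing π-indexed bit exists
    have hexists : ∃ v, v < m ∧ bit i (π v) ≠ bit (i + τ) (π v) := by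
      have hnei : i ≠ i + τ := by omega
      by_contra hcon
      push_neg at hcon
      apply hnei
      apply Nat.eq_of_testBit_eq
      intro k
      by_cases hkm : k < m
      · obtain ⟨v, hv, hπv⟩ := hπ.surjOn (show k ∈ Set.Iio m from by simpa using hkm)
        have hvm : v < m := by simpa using hv
        have hceq := hcon v hvm
        rw [hπv] at hceq
        have e1 := bit_eq_ite i k
        have e2 := bit_eq_ite (i + τ) k
        cases hb1 : i.testBit k <;> cases hb2 : (i + τ).testBit k <;>
          simp [hb1, hb2] at e1 e2 ⊢ <;> omega
      · rw [Nat.testBit_lt_two_pow (lt_of_lt_of_le hiN'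
            (Nat.pow_le_pow_right (by norm_num) (by omega))),
          Nat.testBit_lt_two_pow (lt_of_lt_of_le hjN
            (Nat.pow_le_pow_right (by norm_num) (by omega)))]
    obtain ⟨v0, hv0m, hv0⟩ := hexists
    have hVmem : bit i (π (Vmin π τ i)) ≠ bit (i + τ) (π (Vmin π τ i)) :=
      Nat.sInf_mem (⟨v0, hv0⟩ : Set.Nonempty {v | bit i (π v) ≠ bit (i + τ) (π v)})
    have hVle : Vmin π τ i ≤ v0 := Nat.sInf_le hv0
    have hVm : Vmin π τ i < m := lt_of_le_of_lt hVle hv0m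
    have hVpos : 0 < Vmin π τ i := by
      rcases Nat.eq_zero_or_pos (Vmin π τ i) with h0 | h
      · rw [h0] at hVmem; exact absurd hP hVmem
      · exact h
    have hminimal : ∀ u, u < Vmin π τ i → bit i (π u) = bit (i + τ) (π u) := by
      intro u hu
      have := Nat.notMem_of_lt_sInf (s := {v | bit i (π v) ≠ bit (i + τ) (π v)}) hu
      simpa using this
    obtain ⟨w, hw⟩ : ∃ w, Vmin π τ i = w + 1 := ⟨Vmin π τ i - 1, by omega⟩
    have hw1 : Vmin π τ i - 1 = w := by omega
    rw [hw1]
    have hwm : w + 1 < m := by omega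
    have hpm : π w < m := hmem w (by omega)
    have hbit_ww : bit i (π w) = bit (i + τ) (π w) := hminimal w (by omega)
    -- the shifted pair
    have hij' : (i ^^^ 2 ^ π w) + τ = (i + τ) ^^^ 2 ^ π w := by
      have k1 := xor_two_pow_key (π w) i
      have k2 := xor_two_pow_key (π w) (i + τ)
      rw [hbit_ww] at k1
      generalize (i ^^^ 2 ^ π w) = A at k1 ⊢
      generalize ((i + τ) ^^^ 2 ^ π w) = B at k2 ⊢
      omega
    have hj'N : (i + τ) ^^^ 2 ^ π w < 2 ^ m :=
      Nat.xor_lt_two_pow hjN (Nat.pow_lt_pow_right (by norm_num) hpm)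
    have hi'N : (i ^^^ 2 ^ π w) < 2 ^ m - τ := by
      generalize hA : (i ^^^ 2 ^ π w) = A at hij' ⊢
      generalize hB : ((i + τ) ^^^ 2 ^ π w) = B at hij' hj'N
      omega
    -- transferred bits
    have hbi' : ∀ k, k ≠ π w → bit (i ^^^ 2 ^ π w) k = bit i k := fun k hk => bit_xor_ne hk i
    have hbj' : ∀ k, k ≠ π w → bit ((i + τ) ^^^ 2 ^ π w) k = bit (i + τ) k :=
      fun k hk => bit_xor_ne hk (i + τ)
    have hbi'p : (bit (i ^^^ 2 ^ π w) (π w) : ℤ) = 1 - (bit i (π w) : ℤ) := bit_xor_eq _ i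
    have hbj'p : (bit ((i + τ) ^^^ 2 ^ π w) (π w) : ℤ) = 1 - (bit (i + τ) (π w) : ℤ) :=
      bit_xor_eq _ (i + τ)
    -- bits at π v are preserved-or-flipped-jointly
    have hjoint : ∀ u, u < m → u ≠ w → bit i (π u) = bit (i + τ) (π u) →
        bit (i ^^^ 2 ^ π w) (π u) = bit ((i + τ) ^^^ 2 ^ π w) (π u) := by
      intro u hu huw hequ
      rw [hbi' _ (hne2 u w hu (by omega) huw), hbj' _ (hne2 u w hu (by omega) huw)]
      exact hequ
    have hP' : bit (i ^^^ 2 ^ π w) (π 0) = bit ((i + τ) ^^^ 2 ^ π w) (π 0) := by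
      by_cases h0w : 0 = w
      · rw [← h0w] at hbi'p hbj'p ⊢
        rw [← h0w] at hbit_ww
        omega
      · rw [hbi' _ (hne2 0 w (by omega) (by omega) h0w),
          hbj' _ (hne2 0 w (by omega) (by omega) h0w)]
        exact hP
    have hmem1 : (i ^^^ 2 ^ π w) ∈ Finset.filter
        (fun i => bit i (π 0) = bit (i + τ) (π 0)) (Finset.range (2 ^ m - τ)) := by
      rw [Finset.mem_filter, Finset.mem_range]
      exact ⟨hi'N, by rw [hij']; exact hP'⟩
    -- Vmin is preserved
    have hVmem' : bit (i ^^^ 2 ^ π w) (π (w + 1)) ≠ bit ((i + τ) ^^^ 2 ^ π w) (π (w + 1)) := by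
      rw [hbi' _ (hne2 (w + 1) w (by omega) (by omega) (by omega)),
        hbj' _ (hne2 (w + 1) w (by omega) (by omega) (by omega))]
      rw [hw] at hVmem
      exact hVmem
    have hVeq : Vmin π τ (i ^^^ 2 ^ π w) = Vmin π τ i := by
      unfold Vmin
      rw [hij']
      apply le_antisymm
      · exact le_trans (Nat.sInf_le (show (w + 1) ∈
          {v | bit (i ^^^ 2 ^ π w) (π v) ≠ bit ((i + τ) ^^^ 2 ^ π w) (π v)} from hVmem'))
          (le_of_eq hw.symm)
      · apply le_csInf ⟨w + 1, hVmem'⟩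
        intro u hu
        by_contra hlt
        push_neg at hlt
        have hlt2 : u < Vmin π τ i := hlt
        have hum : u < m := by omega
        rcases eq_or_ne u w with huw | huw
        · subst huw
          have heq : bit (i ^^^ 2 ^ π u) (π u) = bit ((i + τ) ^^^ 2 ^ π u) (π u) := by
            have hbw := hbit_ww
            omega
          exact hu heq
        · exact hu (hjoint u hum huw (hminimal u (by omega)))
    -- the exponent difference
    have hdI := gdiff q m π hπ c cc g hg w hwm i
    have hdJ := gdiff q m π hπ c cc g hg w hwm (i + τ)
    have hGdiff : (g (i ^^^ 2 ^ π w) : ℤ) - (g ((i + τ) ^^^ 2 ^ π w) : ℤ)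
        = ((g i : ℤ) - (g (i + τ) : ℤ))
          + ((q / 2 : ℕ) : ℤ) * ((1 - 2 * (bit i (π w) : ℤ)) *
            ((bit i (π (w + 1)) : ℤ) - (bit (i + τ) (π (w + 1)) : ℤ))) := by
      by_cases hw0 : w = 0
      · subst hw0
        rw [if_pos rfl] at hdI hdJ
        rw [hdI, hdJ, ← hbit_ww]
        ring
      · rw [if_neg hw0] at hdI hdJ
        rw [hdI, hdJ, ← hbit_ww, ← hminimal (w - 1) (by omega)]
        ring
    have hsv : (1 - 2 * (bit i (π w) : ℤ)) *
        ((bit i (π (w + 1)) : ℤ) - (bit (i + τ) (π (w + 1)) : ℤ)) = 1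
        ∨ (1 - 2 * (bit i (π w) : ℤ)) *
        ((bit i (π (w + 1)) : ℤ) - (bit (i + τ) (π (w + 1)) : ℤ)) = -1 := by
      have b1 : bit i (π w) = 0 ∨ bit i (π w) = 1 := by
        have := bit_lt_two i (π w); omega
      have b2 : bit i (π (w + 1)) = 0 ∨ bit i (π (w + 1)) = 1 := by
        have := bit_lt_two i (π (w + 1)); omega
      have b3 : bit (i + τ) (π (w + 1)) = 0 ∨ bit (i + τ) (π (w + 1)) = 1 := by
        have := bit_lt_two (i + τ) (π (w + 1)); omega
      have hne' : bit i (π (w + 1)) ≠ bit (i + τ) (π (w + 1)) := by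
        rw [hw] at hVmem; exact hVmem
      rcases b1 with e1 | e1 <;> rcases b2 with e2 | e2 <;> rcases b3 with e3 | e3 <;>
        rw [e1, e2, e3] <;> omega
    -- putting the cancellation together
    refine ⟨hmem1, by rw [hVeq, hw], ?_, ?_⟩
    · rw [hT i, hT (i ^^^ 2 ^ π w)]
      rw [show (bit i (π 0) : ℤ) - (bit (i + τ) (π 0) : ℤ) = 0 from by rw [hP]; ring]
      rw [show (bit (i ^^^ 2 ^ π w) (π 0) : ℤ)
          - (bit ((i ^^^ 2 ^ π w) + τ) (π 0) : ℤ) = 0 from by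
        rw [hij', hP']; ring]
      rw [mul_zero, zpow_zero, hij']
      rw [show (g (i ^^^ 2 ^ π w) : ℤ) - (g ((i + τ) ^^^ 2 ^ π w) : ℤ)
          = ((g i : ℤ) - (g (i + τ) : ℤ))
            + ((q / 2 : ℕ) : ℤ) * ((1 - 2 * (bit i (π w) : ℤ)) *
              ((bit i (π (w + 1)) : ℤ) - (bit (i + τ) (π (w + 1)) : ℤ))) from hGdiff]
      rw [zpow_add₀ (omegaq_ne_zero q), hhalf _ hsv]
      ring
    · intro hcon
      rw [hcon] at hbi'p
      have := bit_lt_two i (π w)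
      omega
  refine Finset.sum_involution (fun i _ => i ^^^ 2 ^ π (Vmin π τ i - 1))
    (fun i hi => (main i hi).2.2.1)
    (fun i hi _ => (main i hi).2.2.2)
    (fun i hi => (main i hi).1)
    (fun i hi => ?_)
  show (i ^^^ 2 ^ π (Vmin π τ i - 1)) ^^^
      2 ^ π (Vmin π τ (i ^^^ 2 ^ π (Vmin π τ i - 1)) - 1) = i
  rw [(main i hi).2.1]
  exact xor_cancel_right _ _
end

section
/- If i and j=i+τ are integers in [0, 2^{m−2}−1] with 2^{m−2}−2^{k} ≤ τ ≤ 2^{m−2}−1 for some 0≤k≤m−3, then the k-th binary digits of i and j differ. -/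
open Finset Complex

/-- if `j = i + τ` with `2^{m−2} − 2^k ≤ τ ≤ 2^{m−2} − 1` and
`i, j ∈ [0, 2^{m−2}−1]`, `0 ≤ k ≤ m−3`, then the `k`-th binary digits of `i` and `j` differ. -/
theorem stmt_4 (m k i j τ : ℕ) (hm : 4 ≤ m) (hk : k ≤ m - 3)
    (hij : j = i + τ) (hj : j ≤ 2 ^ (m - 2) - 1)
    (hτ1 : 2 ^ (m - 2) - 2 ^ k ≤ τ) (hτ2 : τ ≤ 2 ^ (m - 2) - 1) :
    bit i k ≠ bit j k := by
  set M := m - 2 with hM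
  have hkM : k + 1 ≤ M := by omega
  have hsplit : 2 ^ M = 2 ^ k * 2 ^ (M - k) := by
    rw [← pow_add]; congr 1; omega
  have hkpos : 0 < 2 ^ k := Nat.pow_pos (by norm_num)
  have hMk1 : 2 ^ (M - k) = 2 * 2 ^ (M - k - 1) := by
    rw [← pow_succ']; congr 1; omega
  have hkle : 2 ^ k ≤ 2 ^ M := Nat.pow_le_pow_right (by norm_num) (by omega)
  -- i < 2^k
  have hi : i < 2 ^ k := by omega
  have hbi : bit i k = 0 := by
    unfold bit
    rw [Nat.div_eq_of_lt hi]
  -- j / 2^k = 2^(M-k) - 1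
  have hjlow : (2 ^ (M - k) - 1) * 2 ^ k ≤ j := by
    calc (2 ^ (M - k) - 1) * 2 ^ k = 2 ^ (M - k) * 2 ^ k - 2 ^ k := by
          rw [Nat.sub_mul, one_mul]
      _ = 2 ^ M - 2 ^ k := by rw [mul_comm (2 ^ (M - k)), ← hsplit]
      _ ≤ τ := hτ1
      _ ≤ j := by omega
  have hjhigh : j < 2 ^ (M - k) * 2 ^ k := by
    rw [mul_comm (2 ^ (M - k)), ← hsplit]; omega
  have hjd : j / 2 ^ k = 2 ^ (M - k) - 1 := by
    have h1 : 2 ^ (M - k) - 1 ≤ j / 2 ^ k := (Nat.le_div_iff_mul_le hkpos).2 hjlow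
    have h2 : j / 2 ^ k < 2 ^ (M - k) := (Nat.div_lt_iff_lt_mul hkpos).2 hjhigh
    omega
  have hbj : bit j k = 1 := by
    unfold bit
    rw [hjd, hMk1]
    have hpos : 0 < 2 ^ (M - k - 1) := Nat.pow_pos (by norm_num)
    omega
  omega
end

section
/- With G₁,G₂ as in the CZCP construction (Lemma 2 context), the shifted pair (c,d)=(Ψ_{2^{m−2}−1}(G₁+(q/2)x_{m−2}), Ψ_{2^{m−2}−1}(G₂+(q/2)x_{m−2})) is also a (2^{m−1}+2, 2^{π(m−3)}+1)-CZCP. -/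
open Finset Complex

namespace CZ

lemma bit_le_one (t k : ℕ) : bit t k ≤ 1 := Nat.lt_succ_iff.mp (Nat.mod_lt _ (by norm_num))

lemma bit_cases (t k : ℕ) : bit t k = 0 ∨ bit t k = 1 := by
  have := bit_le_one t k; omega

lemma bit_of_lt {t k : ℕ} (h : t < 2 ^ k) : bit t k = 0 := by
  unfold bit; rw [Nat.div_eq_of_lt h]

lemma two_pow_le_of_bit {t j : ℕ} (h : bit t j = 1) : 2 ^ j ≤ t := by
  by_contra hc
  rw [bit_of_lt (by omega)] at h; omega

lemma bit_add_mul (t s k : ℕ) : bit (t + s * 2 ^ (k + 1)) k = bit t k := by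
  unfold bit
  rw [show s * 2 ^ (k+1) = s * 2 * 2 ^ k by ring,
    Nat.add_mul_div_right _ _ (Nat.two_pow_pos k),
    Nat.add_mul_mod_self_right]

lemma bit_add_pow {t j : ℕ} (h : bit t j = 0) (k : ℕ) :
    bit (t + 2 ^ j) k = if k = j then 1 else bit t k := by
  rcases lt_trichotomy k j with hk | rfl | hk
  · rw [if_neg (by omega)]
    have : (2:ℕ) ^ j = 2 ^ (j - k - 1) * 2 ^ (k + 1) := by
      rw [← pow_add]; congr 1; omega
    rw [this, bit_add_mul]
  · rw [if_pos rfl]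
    unfold bit at h ⊢
    rw [Nat.add_div_right _ (Nat.two_pow_pos k)]
    omega
  · rw [if_neg (by omega)]
    have hBpos : 0 < 2 ^ (j+1) := Nat.two_pow_pos _
    have h2 : t % 2 ^ (j+1) < 2 ^ j := by
      have hb : bit (t % 2 ^ (j+1)) j = 0 := by
        have h3 := bit_add_mul (t % 2 ^ (j+1)) (t / 2 ^ (j+1)) j
        rw [Nat.mod_add_div'] at h3
        rw [← h3]; exact h
      have hlt : t % 2 ^ (j+1) < 2 ^ (j+1) := Nat.mod_lt _ hBpos
      by_contra hc
      push_neg at hc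
      have h4 : t % 2 ^ (j+1) / 2 ^ j = 1 := by
        apply Nat.div_eq_of_lt_le (by simpa using hc)
        rw [show (1+1) * 2^j = 2^(j+1) by ring]
        exact hlt
      unfold bit at hb; rw [h4] at hb; omega
    have hdiv : ∀ s : ℕ, bit s k = bit (s / 2 ^ (j+1)) (k - j - 1) := by
      intro s
      unfold bit
      rw [Nat.div_div_eq_div_mul, ← pow_add]
      congr 3
      omega
    have ht : 2 ^ (j+1) * (t / 2 ^ (j+1)) + t % 2 ^ (j+1) = t := Nat.div_add_mod t _
    have hsplit : t + 2 ^ j = (t % 2 ^ (j+1) + 2 ^ j) + (t / 2 ^ (j+1)) * 2 ^ (j+1) := by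
      conv_lhs => rw [← ht]
      ring
    have hrb : t % 2 ^ (j+1) + 2 ^ j < 2 ^ (j+1) := by
      have hx : (2:ℕ)^(j+1) = 2^j + 2^j := by ring
      omega
    have e1 : (t + 2 ^ j) / 2 ^ (j+1) = t / 2 ^ (j+1) := by
      rw [hsplit, Nat.add_mul_div_right _ _ hBpos, Nat.div_eq_of_lt hrb]
      omega
    rw [hdiv, hdiv t, e1]

lemma bit_sub_pow {t j : ℕ} (h : bit t j = 1) (k : ℕ) :
    bit (t - 2 ^ j) k = if k = j then 0 else bit t k := by
  have hle := two_pow_le_of_bit h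
  have h0 : bit (t - 2 ^ j) j = 0 := by
    have hd : t / 2 ^ j = (t - 2 ^ j) / 2 ^ j + 1 := by
      conv_lhs => rw [← Nat.sub_add_cancel hle]
      rw [Nat.add_div_right _ (Nat.two_pow_pos j)]
    unfold bit at h ⊢
    omega
  have := bit_add_pow h0 k
  rw [Nat.sub_add_cancel hle] at this
  rcases eq_or_ne k j with rfl | hk
  · simpa using h0
  · rw [if_neg hk] at this ⊢; omega

-- flip and structural bit lemmas

lemma bit_eq_testBit (t k : ℕ) : bit t k = (t.testBit k).toNat := by
  rw [Nat.testBit_eq_decide_div_mod_eq]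
  rcases Nat.mod_two_eq_zero_or_one (t / 2 ^ k) with h | h <;> simp [bit, h]

def flip (t j : ℕ) : ℕ := if bit t j = 0 then t + 2 ^ j else t - 2 ^ j

lemma bit_flip (t j k : ℕ) : bit (flip t j) k = if k = j then 1 - bit t j else bit t k := by
  unfold flip
  rcases bit_cases t j with h | h
  · rw [if_pos h, bit_add_pow h, h]
  · rw [if_neg (by omega), bit_sub_pow h, h]

lemma flip_ne (t j : ℕ) : flip t j ≠ t := by
  unfold flip
  have hp : 0 < 2 ^ j := Nat.two_pow_pos _
  rcases bit_cases t j with h | h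
  · rw [if_pos h]; omega
  · rw [if_neg (by omega)]
    have := two_pow_le_of_bit h; omega

lemma flip_flip (t j : ℕ) : flip (flip t j) j = t := by
  rcases bit_cases t j with h0 | h0
  · have e : flip t j = t + 2 ^ j := by unfold flip; rw [if_pos h0]
    have hb : bit (t + 2 ^ j) j = 1 := by rw [bit_add_pow h0]; simp
    rw [e]; unfold flip; rw [hb]
    simp
  · have hle := two_pow_le_of_bit h0
    have e : flip t j = t - 2 ^ j := by unfold flip; rw [if_neg (by omega)]
    have hb : bit (t - 2 ^ j) j = 0 := by rw [bit_sub_pow h0]; simp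
    rw [e]; unfold flip; rw [if_pos hb, Nat.sub_add_cancel hle]

lemma flip_add {t j τ : ℕ} (h : bit t j = bit (t + τ) j) :
    flip t j + τ = flip (t + τ) j := by
  unfold flip
  rcases bit_cases t j with h0 | h0
  · rw [if_pos h0, if_pos (by omega)]; ring
  · have h1 := two_pow_le_of_bit h0
    rw [if_neg (by omega), if_neg (by omega)]
    omega

lemma flip_lt {t j M : ℕ} (ht : t < 2 ^ M) (hj : j < M) : flip t j < 2 ^ M := by
  unfold flip
  rcases bit_cases t j with h0 | h0
  · rw [if_pos h0]
    by_contra hc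
    push_neg at hc
    have hb := bit_add_pow h0 j
    rw [if_pos rfl] at hb
    have h2 : t + 2 ^ j - 2 ^ M < 2 ^ j := by omega
    have h3 : bit (t + 2 ^ j) j = bit (t + 2 ^ j - 2 ^ M) j := by
      have hsp : t + 2 ^ j = (t + 2 ^ j - 2 ^ M) + 2 ^ (M - j - 1) * 2 ^ (j + 1) := by
        have hMe : (2:ℕ) ^ (M - j - 1) * 2 ^ (j+1) = 2 ^ M := by
          rw [← pow_add]; congr 1; omega
        omega
      conv_lhs => rw [hsp]
      rw [bit_add_mul]
    rw [h3, bit_of_lt h2] at hb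
    omega
  · rw [if_neg (by omega)]
    have := Nat.sub_le t (2 ^ j)
    omega

lemma bit_two_pow (p k : ℕ) : bit (2 ^ p) k = if k = p then 1 else 0 := by
  have h := bit_add_pow (t := 0) (j := p) (by simp [bit]) k
  simpa [bit] using h

lemma bit_pred_pow {M k : ℕ} (hk : k < M) : bit (2 ^ M - 1) k = 1 := by
  rw [bit_eq_testBit, Nat.testBit_two_pow_sub_one]
  simp [hk]

lemma bit_compl {t k M : ℕ} (ht : t < 2 ^ M) (hk : k < M) :
    bit (2 ^ M - 1 - t) k = 1 - bit t k := by
  have h : 2 ^ M - 1 - t = 2 ^ M - (t + 1) := by omega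
  rw [h, bit_eq_testBit, Nat.testBit_two_pow_sub_succ ht, bit_eq_testBit]
  cases hb : t.testBit k <;> simp [hk, hb]

lemma bit_high_one {t p M : ℕ} (hp : p < M) (h1 : 2 ^ M - 2 ^ p ≤ t) (h2 : t < 2 ^ M) :
    bit t p = 1 := by
  have hc : 2 ^ M - 1 - t < 2 ^ p := by
    have : (1:ℕ) ≤ 2 ^ p := Nat.one_le_two_pow
    omega
  have h3 : bit (2 ^ M - 1 - (2 ^ M - 1 - t)) p = 1 - bit (2 ^ M - 1 - t) p :=
    bit_compl (by have : (1:ℕ) ≤ 2^M := Nat.one_le_two_pow; omega) hp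
  rw [bit_of_lt hc] at h3
  rw [show 2 ^ M - 1 - (2 ^ M - 1 - t) = t by omega] at h3
  omega

-- ZMod 2 layer

def Bb (t k : ℕ) : ZMod 2 := (bit t k : ZMod 2)

def χ (x : ZMod 2) : ℤ := if x = 0 then 1 else -1

lemma χ_add (x y : ZMod 2) : χ (x + y) = χ x * χ y := by revert x y; decide

lemma χ_zero : χ 0 = 1 := rfl
lemma χ_one : χ 1 = -1 := rfl

lemma χ_add_one (x : ZMod 2) : χ (x + 1) = -χ x := by revert x; decide

lemma Bb_flip (t j k : ℕ) : Bb (flip t j) k = Bb t k + if k = j then 1 else 0 := by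
  unfold Bb
  rw [bit_flip]
  rcases eq_or_ne k j with rfl | hk
  · rcases bit_cases t k with h | h <;> simp [h] <;> decide
  · simp [hk]

lemma Bb_of_lt {t k : ℕ} (h : t < 2 ^ k) : Bb t k = 0 := by simp [Bb, bit_of_lt h]

lemma Bb_eq_one {t k : ℕ} (h : bit t k = 1) : Bb t k = 1 := by simp [Bb, h]

lemma Bb_ne_sum {a b k l : ℕ} (h : bit a k ≠ bit b l) : Bb a k + Bb b l = 1 := by
  unfold Bb
  rcases bit_cases a k with h1 | h1 <;> rcases bit_cases b l with h2 | h2 <;>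
    simp_all
  all_goals decide

lemma Bb_eq_sum {a b k l : ℕ} (h : bit a k = bit b l) : Bb a k + Bb b l = 0 := by
  unfold Bb
  rcases bit_cases a k with h1 | h1 <;> rcases bit_cases b l with h2 | h2 <;>
    simp_all
  all_goals decide

/-- the quadratic form -/
def G2 (M : ℕ) (π : ℕ → ℕ) (t : ℕ) : ZMod 2 :=
  ∑ k ∈ Finset.range (M - 1), Bb t (π k) * Bb t (π (k + 1))

lemma G2_congr {M : ℕ} {π : ℕ → ℕ} {s t : ℕ} (h : ∀ y, y < M → bit s y = bit t y)
    (hmaps : ∀ k, k < M → π k < M) (hM : 1 ≤ M) :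
    G2 M π s = G2 M π t := by
  unfold G2
  apply Finset.sum_congr rfl
  intro k hk
  rw [Finset.mem_range] at hk
  unfold Bb
  rw [h _ (hmaps k (by omega)), h _ (hmaps (k+1) (by omega))]

/-- effect of flipping bit `π β` on the quadratic form -/
lemma G2_flip {M : ℕ} {π : ℕ → ℕ} (hinj : Set.InjOn π (Set.Iio M))
    (hmaps : ∀ k, k < M → π k < M) {β : ℕ} (hβ : β < M) (t : ℕ) :
    G2 M π (flip t (π β)) = G2 M π t
      + (if β + 1 < M then Bb t (π (β + 1)) else 0)
      + (if 1 ≤ β then Bb t (π (β - 1)) else 0) := by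
  unfold G2
  have hBb : ∀ k, k < M → Bb (flip t (π β)) (π k) = Bb t (π k) + if k = β then 1 else 0 := by
    intro k hk
    rw [Bb_flip]
    congr 1
    rcases eq_or_ne k β with rfl | hne
    · simp
    · rw [if_neg hne, if_neg (fun hc => hne (hinj (by simpa using hk) (by simpa using hβ) hc))]
  have hterm : ∀ k ∈ Finset.range (M - 1),
      Bb (flip t (π β)) (π k) * Bb (flip t (π β)) (π (k + 1)) =
      Bb t (π k) * Bb t (π (k + 1))
        + ((if k = β then Bb t (π (k + 1)) else 0)
        + (if k + 1 = β then Bb t (π k) else 0)) := by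
    intro k hk
    rw [Finset.mem_range] at hk
    rw [hBb k (by omega), hBb (k+1) (by omega)]
    rcases eq_or_ne k β with rfl | h1
    · rw [if_pos rfl, if_pos rfl, if_neg (by omega), if_neg (by omega)]
      ring
    · rcases eq_or_ne (k + 1) β with h2 | h2
      · rw [if_neg h1, if_pos h2, if_neg h1, if_pos h2]
        ring
      · rw [if_neg h1, if_neg h2, if_neg h1, if_neg h2]
        ring
  rw [Finset.sum_congr rfl hterm, Finset.sum_add_distrib, Finset.sum_add_distrib]
  rw [add_assoc]
  congr 1
  congr 1
  · rw [Finset.sum_ite_eq' (Finset.range (M-1))]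
    simp only [Finset.mem_range]
    rcases Nat.lt_or_ge β (M - 1) with h | h
    · rw [if_pos h, if_pos (by omega)]
    · rw [if_neg (by omega), if_neg (by omega)]
  · rcases Nat.eq_zero_or_pos β with rfl | hb
    · simp
    · rw [if_pos (show 1 ≤ β by omega)]
      obtain ⟨b, rfl⟩ : ∃ b, β = b + 1 := ⟨β - 1, by omega⟩
      have he : ∀ k : ℕ, (k + 1 = b + 1) = (k = b) := by intro k; simp
      simp only [he]
      rw [Finset.sum_ite_eq' (Finset.range (M-1)), if_pos (by simp only [Finset.mem_range]; omega)]
      simp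

/-- complement identity for the quadratic form -/
lemma G2_compl {M : ℕ} {π : ℕ → ℕ}
    (hmaps : ∀ k, k < M → π k < M) (hM : 1 ≤ M) {t : ℕ} (ht : t < 2 ^ M) :
    G2 M π (2 ^ M - 1 - t) = G2 M π t + ((M - 1 : ℕ) : ZMod 2) + Bb t (π 0) + Bb t (π (M - 1)) := by
  unfold G2
  have hBb : ∀ k, k < M → Bb (2 ^ M - 1 - t) (π k) = 1 + Bb t (π k) := by
    intro k hk
    unfold Bb
    rw [bit_compl ht (hmaps k hk)]
    rcases bit_cases t (π k) with h | h <;> simp [h] <;> decide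
  have hterm : ∀ k ∈ Finset.range (M - 1),
      Bb (2^M - 1 - t) (π k) * Bb (2^M - 1 - t) (π (k + 1)) =
      Bb t (π k) * Bb t (π (k + 1)) + (Bb t (π k) + Bb t (π (k+1)) + 1) := by
    intro k hk
    rw [Finset.mem_range] at hk
    rw [hBb k (by omega), hBb (k+1) (by omega)]
    ring
  rw [Finset.sum_congr rfl hterm, Finset.sum_add_distrib, Finset.sum_add_distrib,
    Finset.sum_add_distrib]
  simp only [Finset.sum_const, Finset.card_range, nsmul_eq_mul, mul_one]
  obtain ⟨n, rfl⟩ : ∃ n, M = n + 1 := ⟨M - 1, by omega⟩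
  simp only [Nat.add_sub_cancel]
  have hS1 : ∑ k ∈ Finset.range (n + 1), Bb t (π k)
      = ∑ k ∈ Finset.range n, Bb t (π k) + Bb t (π n) := Finset.sum_range_succ _ _
  have hS2 : ∑ k ∈ Finset.range (n + 1), Bb t (π k)
      = ∑ k ∈ Finset.range n, Bb t (π (k + 1)) + Bb t (π 0) := Finset.sum_range_succ' _ _
  have hsum : ∑ k ∈ Finset.range n, Bb t (π k) + ∑ k ∈ Finset.range n, Bb t (π (k + 1))
      = Bb t (π n) + Bb t (π 0) := by
    have h2 : (∑ k ∈ Finset.range n, Bb t (π k) + Bb t (π n))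
        + (∑ k ∈ Finset.range n, Bb t (π (k + 1)) + Bb t (π 0))
        = (∑ k ∈ Finset.range (n+1), Bb t (π k)) + (∑ k ∈ Finset.range (n+1), Bb t (π k)) := by
      rw [← hS1, ← hS2]
    have h3 : ∀ x : ZMod 2, x + x = 0 := by decide
    have h4 := h2
    rw [h3] at h4
    -- a + pn + (b + p0) = 0  →  a + b = pn + p0
    have h5 : ∀ a b c d : ZMod 2, a + c + (b + d) = 0 → a + b = c + d := by decide
    exact h5 _ _ _ _ h4
  rw [add_assoc (∑ k ∈ Finset.range n, Bb t (π k) * Bb t (π (k+1)))]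
  rw [hsum]
  ring

-- bit extensionality
lemma bit_ext {a b : ℕ} (h : ∀ k, bit a k = bit b k) : a = b := by
  apply Nat.eq_of_testBit_eq
  intro k
  have h1 := h k
  rw [bit_eq_testBit, bit_eq_testBit] at h1
  cases ha : a.testBit k <;> cases hb : b.testBit k <;> simp [ha, hb] at h1 ⊢

lemma zmod2_add_self (x : ZMod 2) : x + x = 0 := by revert x; decide

/-- The Golay-pair cancellation lemma (Davis–Jedwab argument), with a shared
affine offset ℓ. -/
lemma golay {M : ℕ} (hM : 2 ≤ M) {π : ℕ → ℕ} (hπ : Set.BijOn π (Set.Iio M) (Set.Iio M))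
    (ℓ : ℕ → ZMod 2) (cℓ : ℕ → ZMod 2) (hℓ : ∀ t j, j < M → ℓ (flip t j) = ℓ t + cℓ j)
    (τ : ℕ) (hτ : 1 ≤ τ) :
    ∑ t ∈ Finset.range (2 ^ M - τ),
      (χ (G2 M π t + ℓ t) * χ (G2 M π (t + τ) + ℓ (t + τ))
        + χ (G2 M π t + ℓ t + Bb t (π 0)) * χ (G2 M π (t + τ) + ℓ (t + τ) + Bb (t + τ) (π 0)))
      = 0 := by
  classical
  have hmaps : ∀ k, k < M → π k < M := fun k hk =>
    Set.mem_Iio.mp (hπ.mapsTo (Set.mem_Iio.mpr hk))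
  have hinj : Set.InjOn π (Set.Iio M) := hπ.injOn
  set A : ℕ → ZMod 2 := fun s => G2 M π s + ℓ s with hA
  set F : ℕ → ℤ := fun t => χ (A t + A (t + τ))
      + χ ((A t + A (t + τ)) + (Bb t (π 0) + Bb (t + τ) (π 0))) with hF
  have hgoal : ∀ t, (χ (G2 M π t + ℓ t) * χ (G2 M π (t + τ) + ℓ (t + τ))
        + χ (G2 M π t + ℓ t + Bb t (π 0)) * χ (G2 M π (t + τ) + ℓ (t + τ) + Bb (t + τ) (π 0)))
      = F t := by
    intro t
    rw [hF]
    simp only [hA, ← χ_add]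
    congr 2
    ring
  rw [Finset.sum_congr rfl (fun t _ => hgoal t)]
  -- existence of a differing bit position
  have hwit : ∀ t, t + τ < 2 ^ M → ∃ α, α < M ∧ bit t (π α) ≠ bit (t + τ) (π α) := by
    intro t ht'
    by_contra hc
    push_neg at hc
    have hall : ∀ k, bit t k = bit (t + τ) k := by
      intro k
      rcases Nat.lt_or_ge k M with hk | hk
      · obtain ⟨α, hα, rfl⟩ := hπ.surjOn (Set.mem_Iio.mpr hk)
        exact hc α (Set.mem_Iio.mp hα)
      · have h2M : (2:ℕ) ^ M ≤ 2 ^ k := Nat.pow_le_pow_right (by norm_num) hk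
        rw [bit_of_lt (by omega), bit_of_lt (by omega)]
    have := bit_ext hall
    omega
  have hex : ∀ t, t + τ < 2 ^ M → ∃ α, bit t (π α) ≠ bit (t + τ) (π α) := by
    intro t ht'
    obtain ⟨α, _, hα⟩ := hwit t ht'
    exact ⟨α, hα⟩
  have hfindlt : ∀ t (ht' : t + τ < 2 ^ M) (h : ∃ α, bit t (π α) ≠ bit (t + τ) (π α)),
      Nat.find h < M := by
    intro t ht' h
    obtain ⟨α, hαM, hα⟩ := hwit t ht'
    exact lt_of_le_of_lt (Nat.find_min' h hα) hαM
  -- the involution, as a total function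
  set I : ℕ → ℕ := fun t =>
    if h : ∃ α, bit t (π α) ≠ bit (t + τ) (π α) then
      (if Nat.find h = 0 then t else flip t (π (Nat.find h - 1))) else t with hI
  -- main step facts for the nonzero case
  have hstep : ∀ t (ht' : t + τ < 2 ^ M) (h : ∃ α, bit t (π α) ≠ bit (t + τ) (π α))
      (h0 : Nat.find h ≠ 0),
      (flip t (π (Nat.find h - 1)) + τ = flip (t + τ) (π (Nat.find h - 1))) ∧
      (flip (t + τ) (π (Nat.find h - 1)) < 2 ^ M) ∧
      (F (flip t (π (Nat.find h - 1))) = - F t) ∧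
      (I (flip t (π (Nat.find h - 1))) = t) := by
    intro t ht' h h0
    set α := Nat.find h with hα
    have hαM : α < M := hfindlt t ht' h
    set β := α - 1 with hβ
    have hβM : β < M := by omega
    set j := π β with hj
    have hjM : j < M := hmaps β hβM
    have hsame : bit t j = bit (t + τ) j := by
      have hmin := Nat.find_min h (show β < α by omega)
      exact not_not.mp hmin
    have hadd : flip t j + τ = flip (t + τ) j := flip_add hsame
    have hlt2 : flip (t + τ) j < 2 ^ M := flip_lt ht' hjM
    have key1 : Bb t (π α) + Bb (t + τ) (π α) = 1 := Bb_ne_sum (Nat.find_spec h)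
    have hAsum : A (flip t j) + A (flip (t + τ) j) = (A t + A (t + τ)) + 1 := by
      simp only [hA]
      rw [hj, G2_flip hinj hmaps hβM t, G2_flip hinj hmaps hβM (t + τ), ← hj,
        hℓ t j hjM, hℓ (t + τ) j hjM]
      rw [show β + 1 = α from by omega]
      rw [if_pos hαM, if_pos hαM]
      rcases Nat.lt_or_ge β 1 with h1 | h1
      · rw [if_neg (by omega), if_neg (by omega)]
        linear_combination key1 + zmod2_add_self (cℓ j)
      · rw [if_pos h1, if_pos h1]
        have key2 : Bb t (π (β - 1)) + Bb (t + τ) (π (β - 1)) = 0 :=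
          Bb_eq_sum (not_not.mp (Nat.find_min h (show β - 1 < α by omega)))
        linear_combination key1 + key2 + zmod2_add_self (cℓ j)
    have hBsum : Bb (flip t j) (π 0) + Bb (flip (t + τ) j) (π 0)
        = Bb t (π 0) + Bb (t + τ) (π 0) := by
      rw [Bb_flip, Bb_flip]
      split_ifs with h1
      · linear_combination zmod2_add_self 1
      · ring
    have hFt : F (flip t j) = - F t := by
      rw [hF]
      simp only
      rw [hadd, hAsum, hBsum]
      rw [χ_add_one, show (A t + A (t + τ) + 1) + (Bb t (π 0) + Bb (t + τ) (π 0))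
        = (A t + A (t + τ) + (Bb t (π 0) + Bb (t + τ) (π 0))) + 1 from by ring, χ_add_one]
      ring
    have hPiff : ∀ γ, (bit (flip t j) (π γ) ≠ bit (flip t j + τ) (π γ))
        ↔ (bit t (π γ) ≠ bit (t + τ) (π γ)) := by
      intro γ
      rw [hadd, bit_flip, bit_flip]
      rcases eq_or_ne (π γ) j with he | he
      · rw [if_pos he, if_pos he, he]
        have b1 := bit_le_one t j
        have b2 := bit_le_one (t + τ) j
        rw [hsame]
        constructor <;> intro hne <;> omega
      · rw [if_neg he, if_neg he]
    have h'' : ∃ γ, bit (flip t j) (π γ) ≠ bit (flip t j + τ) (π γ) :=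
      ⟨α, (hPiff α).mpr (Nat.find_spec h)⟩
    have hfind'' : Nat.find h'' = α := by
      rw [Nat.find_eq_iff]
      exact ⟨(hPiff α).mpr (Nat.find_spec h),
        fun m hm hc => Nat.find_min h hm ((hPiff m).mp hc)⟩
    have hIval : I (flip t j) = t := by
      rw [hI]
      simp only
      rw [dif_pos h'', hfind'', if_neg h0, hj, flip_flip]
    exact ⟨hadd, hlt2, hFt, hIval⟩
  -- apply the involution principle
  apply Finset.sum_involution (fun t _ => I t)
  · -- F t + F (I t) = 0
    intro t ht
    show F t + F (I t) = 0
    rw [Finset.mem_range] at ht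
    have ht' : t + τ < 2 ^ M := by omega
    have h : ∃ α, bit t (π α) ≠ bit (t + τ) (π α) := hex t ht'
    by_cases h0 : Nat.find h = 0
    · have hIt : I t = t := by rw [hI]; simp only; rw [dif_pos h, if_pos h0]
      have hR : Bb t (π 0) + Bb (t + τ) (π 0) = 1 := by
        apply Bb_ne_sum
        have := Nat.find_spec h
        rwa [h0] at this
      have hF0 : F t = 0 := by
        rw [hF]
        simp only
        rw [hR, χ_add_one]
        ring
      rw [hIt, hF0]
      ring
    · have hIt : I t = flip t (π (Nat.find h - 1)) := by
        rw [hI]; simp only; rw [dif_pos h, if_neg h0]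
      obtain ⟨_, _, hFt, _⟩ := hstep t ht' h h0
      rw [hIt, hFt]
      ring
  · -- F t ≠ 0 → I t ≠ t
    intro t ht hFne
    replace hFne : F t ≠ 0 := hFne
    rw [Finset.mem_range] at ht
    have ht' : t + τ < 2 ^ M := by omega
    have h : ∃ α, bit t (π α) ≠ bit (t + τ) (π α) := hex t ht'
    by_cases h0 : Nat.find h = 0
    · exfalso
      apply hFne
      have hR : Bb t (π 0) + Bb (t + τ) (π 0) = 1 := by
        apply Bb_ne_sum
        have := Nat.find_spec h
        rwa [h0] at this
      rw [hF]
      simp only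
      rw [hR, χ_add_one]
      ring
    · have hIt : I t = flip t (π (Nat.find h - 1)) := by
        rw [hI]; simp only; rw [dif_pos h, if_neg h0]
      rw [hIt]
      exact flip_ne t _
  · -- I t ∈ range
    intro t ht
    rw [Finset.mem_range] at ht ⊢
    have ht' : t + τ < 2 ^ M := by omega
    have h : ∃ α, bit t (π α) ≠ bit (t + τ) (π α) := hex t ht'
    by_cases h0 : Nat.find h = 0
    · have hIt : I t = t := by rw [hI]; simp only; rw [dif_pos h, if_pos h0]
      omega
    · have hIt : I t = flip t (π (Nat.find h - 1)) := by
        rw [hI]; simp only; rw [dif_pos h, if_neg h0]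
      obtain ⟨hadd, hlt2, _, _⟩ := hstep t ht' h h0
      rw [hIt]
      omega
  · -- involution
    intro t ht
    rw [Finset.mem_range] at ht
    have ht' : t + τ < 2 ^ M := by omega
    have h : ∃ α, bit t (π α) ≠ bit (t + τ) (π α) := hex t ht'
    by_cases h0 : Nat.find h = 0
    · have hIt : I t = t := by rw [hI]; simp only; rw [dif_pos h, if_pos h0]
      simp only [hIt]
    · have hIt : I t = flip t (π (Nat.find h - 1)) := by
        rw [hI]; simp only; rw [dif_pos h, if_neg h0]
      obtain ⟨_, _, _, hIval⟩ := hstep t ht' h h0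
      simp only [hIt, hIval]

-- reversal of the permutation
lemma G2_rev {M : ℕ} (hM : 1 ≤ M) (π : ℕ → ℕ) (t : ℕ) :
    G2 M (fun k => π (M - 1 - k)) t = G2 M π t := by
  unfold G2
  have h1 : ∀ k ∈ Finset.range (M - 1),
      Bb t (π (M - 1 - k)) * Bb t (π (M - 1 - (k + 1)))
        = (fun k => Bb t (π k) * Bb t (π (k + 1))) (M - 1 - 1 - k) := by
    intro k hk
    rw [Finset.mem_range] at hk
    simp only
    rw [show M - 1 - (k + 1) = M - 1 - 1 - k from by omega,
      show M - 1 - 1 - k + 1 = M - 1 - k from by omega]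
    ring
  rw [Finset.sum_congr rfl h1]
  exact Finset.sum_range_reflect (fun k => Bb t (π k) * Bb t (π (k + 1))) (M - 1)

lemma rev_bijOn {M : ℕ} (hM : 1 ≤ M) {π : ℕ → ℕ} (hπ : Set.BijOn π (Set.Iio M) (Set.Iio M)) :
    Set.BijOn (fun k => π (M - 1 - k)) (Set.Iio M) (Set.Iio M) := by
  constructor
  · intro k hk
    exact hπ.mapsTo (Set.mem_Iio.mpr (by simp only [Set.mem_Iio] at hk; omega))
  constructor
  · intro a ha b hb hab
    simp only [Set.mem_Iio] at ha hb
    have := hπ.injOn (Set.mem_Iio.mpr (show M - 1 - a < M by omega))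
      (Set.mem_Iio.mpr (show M - 1 - b < M by omega)) hab
    omega
  · intro y hy
    obtain ⟨α, hα, rfl⟩ := hπ.surjOn hy
    simp only [Set.mem_Iio] at hα
    exact ⟨M - 1 - α, Set.mem_Iio.mpr (by omega), by simp only; congr 1; omega⟩

/-- the exponent functions (mod 2) of the two sequences -/
def KZ (M : ℕ) (π : ℕ → ℕ) (j : ℕ) : ZMod 2 :=
  (1 + Bb j (M + 1)) * Bb j M * G2 M π j
    + Bb j (M + 1) * (1 + Bb j M) * (G2 M π j + Bb j (π 0) + (M : ZMod 2))
    + Bb j (M + 1) * Bb j M + Bb j M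

def KZ' (M : ℕ) (π : ℕ → ℕ) (j : ℕ) : ZMod 2 :=
  (1 + Bb j (M + 1)) * Bb j M * G2 M π j
    + Bb j (M + 1) * (1 + Bb j M) * (G2 M π j + Bb j (π 0) + (M : ZMod 2))
    + Bb j (π (M - 1)) * (Bb j (M + 1) + Bb j M) + Bb j M

section regions
variable {M : ℕ} {π : ℕ → ℕ}

lemma bitX {t : ℕ} (ht : t < 2 ^ M) (k : ℕ) :
    bit (2 ^ M + t) k = if k = M then 1 else bit t k := by
  rw [add_comm, bit_add_pow (bit_of_lt ht)]

lemma bitE (k : ℕ) :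
    bit (2 ^ (M + 1) + 2 ^ M) k = if k = M + 1 then 1 else if k = M then 1 else 0 := by
  rw [add_comm, bit_add_pow (by rw [bit_two_pow, if_neg (by omega)] : bit (2 ^ M) (M + 1) = 0)]
  rcases eq_or_ne k (M + 1) with rfl | hk
  · rw [if_pos rfl, if_pos rfl]
  · rw [if_neg hk, if_neg hk, bit_two_pow]

lemma bitY {u : ℕ} (hu : u < 2 ^ M) (k : ℕ) :
    bit (2 ^ (M + 1) + u) k = if k = M + 1 then 1 else bit u k := by
  rw [add_comm, bit_add_pow (bit_of_lt (lt_trans hu (by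
    have : (2:ℕ)^M < 2^(M+1) := Nat.pow_lt_pow_right (by norm_num) (by omega)
    exact this)))]

variable (hM : 2 ≤ M) (hmaps : ∀ k, k < M → π k < M)
include hM hmaps

lemma G2_X {t : ℕ} (ht : t < 2 ^ M) : G2 M π (2 ^ M + t) = G2 M π t :=
  G2_congr (fun y hy => by rw [bitX ht, if_neg (by omega)]) hmaps (by omega)

lemma G2_Y {u : ℕ} (hu : u < 2 ^ M) : G2 M π (2 ^ (M + 1) + u) = G2 M π u :=
  G2_congr (fun y hy => by rw [bitY hu, if_neg (by omega)]) hmaps (by omega)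

lemma KZ_X {t : ℕ} (ht : t < 2 ^ M) : KZ M π (2 ^ M + t) = G2 M π t + 1 := by
  unfold KZ
  have h1 : Bb (2 ^ M + t) (M + 1) = 0 := by
    unfold Bb; rw [bitX ht, if_neg (by omega), bit_of_lt (by
      calc t < 2 ^ M := ht
      _ < 2 ^ (M+1) := Nat.pow_lt_pow_right (by norm_num) (by omega))]
    simp
  have h2 : Bb (2 ^ M + t) M = 1 := by
    unfold Bb; rw [bitX ht, if_pos rfl]; simp
  rw [h1, h2, G2_X hM hmaps ht]
  ring

lemma KZ'_X {t : ℕ} (ht : t < 2 ^ M) :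
    KZ' M π (2 ^ M + t) = G2 M π t + Bb t (π (M - 1)) + 1 := by
  unfold KZ'
  have h1 : Bb (2 ^ M + t) (M + 1) = 0 := by
    unfold Bb; rw [bitX ht, if_neg (by omega), bit_of_lt (by
      calc t < 2 ^ M := ht
      _ < 2 ^ (M+1) := Nat.pow_lt_pow_right (by norm_num) (by omega))]
    simp
  have h2 : Bb (2 ^ M + t) M = 1 := by
    unfold Bb; rw [bitX ht, if_pos rfl]; simp
  have h3 : Bb (2 ^ M + t) (π (M - 1)) = Bb t (π (M - 1)) := by
    unfold Bb; rw [bitX ht, if_neg (by have := hmaps (M-1) (by omega); omega)]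
  rw [h1, h2, h3, G2_X hM hmaps ht]
  ring

lemma KZ_Y {u : ℕ} (hu : u < 2 ^ M) :
    KZ M π (2 ^ (M + 1) + u) = G2 M π u + Bb u (π 0) + (M : ZMod 2) := by
  unfold KZ
  have h1 : Bb (2 ^ (M + 1) + u) (M + 1) = 1 := by
    unfold Bb; rw [bitY hu, if_pos rfl]; simp
  have h2 : Bb (2 ^ (M + 1) + u) M = 0 := by
    unfold Bb; rw [bitY hu, if_neg (by omega), bit_of_lt hu]; simp
  have h3 : Bb (2 ^ (M + 1) + u) (π 0) = Bb u (π 0) := by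
    unfold Bb; rw [bitY hu, if_neg (by have := hmaps 0 (by omega); omega)]
  rw [h1, h2, h3, G2_Y hM hmaps hu]
  ring

lemma KZ'_Y {u : ℕ} (hu : u < 2 ^ M) :
    KZ' M π (2 ^ (M + 1) + u) = G2 M π u + Bb u (π 0) + (M : ZMod 2) + Bb u (π (M - 1)) := by
  unfold KZ'
  have h1 : Bb (2 ^ (M + 1) + u) (M + 1) = 1 := by
    unfold Bb; rw [bitY hu, if_pos rfl]; simp
  have h2 : Bb (2 ^ (M + 1) + u) M = 0 := by
    unfold Bb; rw [bitY hu, if_neg (by omega), bit_of_lt hu]; simp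
  have h3 : Bb (2 ^ (M + 1) + u) (π 0) = Bb u (π 0) := by
    unfold Bb; rw [bitY hu, if_neg (by have := hmaps 0 (by omega); omega)]
  have h4 : Bb (2 ^ (M + 1) + u) (π (M - 1)) = Bb u (π (M - 1)) := by
    unfold Bb; rw [bitY hu, if_neg (by have := hmaps (M-1) (by omega); omega)]
  rw [h1, h2, h3, h4, G2_Y hM hmaps hu]
  ring

lemma KZ_F : KZ M π (2 ^ M - 1) = 0 := by
  unfold KZ
  have hlt : (2:ℕ) ^ M - 1 < 2 ^ M := by have : (1:ℕ) ≤ 2 ^ M := Nat.one_le_two_pow; omega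
  have h1 : Bb (2 ^ M - 1) (M + 1) = 0 := Bb_of_lt (by
    calc (2:ℕ)^M - 1 < 2^M := hlt
    _ < 2^(M+1) := Nat.pow_lt_pow_right (by norm_num) (by omega))
  have h2 : Bb (2 ^ M - 1) M = 0 := Bb_of_lt hlt
  rw [h1, h2]
  ring

lemma KZ'_F : KZ' M π (2 ^ M - 1) = 0 := by
  unfold KZ'
  have hlt : (2:ℕ) ^ M - 1 < 2 ^ M := by have : (1:ℕ) ≤ 2 ^ M := Nat.one_le_two_pow; omega
  have h1 : Bb (2 ^ M - 1) (M + 1) = 0 := Bb_of_lt (by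
    calc (2:ℕ)^M - 1 < 2^M := hlt
    _ < 2^(M+1) := Nat.pow_lt_pow_right (by norm_num) (by omega))
  have h2 : Bb (2 ^ M - 1) M = 0 := Bb_of_lt hlt
  rw [h1, h2]
  ring

lemma KZ_E : KZ M π (2 ^ (M + 1) + 2 ^ M) = 0 := by
  unfold KZ
  have hu : (2:ℕ) ^ M < 2 ^ (M+1) := Nat.pow_lt_pow_right (by norm_num) (by omega)
  have h1 : Bb (2 ^ (M + 1) + 2 ^ M) (M + 1) = 1 := by
    unfold Bb; rw [bitE, if_pos rfl]; simp
  have h2 : Bb (2 ^ (M + 1) + 2 ^ M) M = 1 := by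
    unfold Bb; rw [bitE, if_neg (by omega), if_pos rfl]; simp
  rw [h1, h2]
  have := zmod2_add_self (1 : ZMod 2)
  linear_combination (G2 M π (2 ^ (M+1) + 2 ^ M)) * this
    + (G2 M π (2 ^ (M+1) + 2 ^ M) + Bb (2 ^ (M+1) + 2 ^ M) (π 0) + (M : ZMod 2)) * this + this

lemma KZ'_E : KZ' M π (2 ^ (M + 1) + 2 ^ M) = 1 := by
  unfold KZ'
  have hu : (2:ℕ) ^ M < 2 ^ (M+1) := Nat.pow_lt_pow_right (by norm_num) (by omega)
  have h1 : Bb (2 ^ (M + 1) + 2 ^ M) (M + 1) = 1 := by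
    unfold Bb; rw [bitE, if_pos rfl]; simp
  have h2 : Bb (2 ^ (M + 1) + 2 ^ M) M = 1 := by
    unfold Bb; rw [bitE, if_neg (by omega), if_pos rfl]; simp
  rw [h1, h2]
  have := zmod2_add_self (1 : ZMod 2)
  linear_combination (G2 M π (2 ^ (M+1) + 2 ^ M)) * this
    + (G2 M π (2 ^ (M+1) + 2 ^ M) + Bb (2 ^ (M+1) + 2 ^ M) (π 0) + (M : ZMod 2)) * this
    + Bb (2 ^ (M+1) + 2 ^ M) (π (M - 1)) * this

end regions

-- values of the quadratic form at special points
lemma G2_zero {M : ℕ} (π : ℕ → ℕ) : G2 M π 0 = 0 := by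
  unfold G2
  apply Finset.sum_eq_zero
  intro k _
  rw [Bb_of_lt (Nat.two_pow_pos _), zero_mul]

lemma G2_two_pow {M : ℕ} {π : ℕ → ℕ} (hinj : Set.InjOn π (Set.Iio M))
    (hmaps : ∀ k, k < M → π k < M) {p : ℕ} (hp : p < M) : G2 M π (2 ^ p) = 0 := by
  unfold G2
  apply Finset.sum_eq_zero
  intro k hk
  rw [Finset.mem_range] at hk
  have hne : π k ≠ π (k + 1) := by
    intro hc
    have := hinj (Set.mem_Iio.mpr (show k < M by omega))
      (Set.mem_Iio.mpr (show k + 1 < M by omega)) hc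
    omega
  rcases eq_or_ne (π k) p with rfl | h1
  · have h2 : Bb (2 ^ π k) (π (k+1)) = 0 := by
      unfold Bb; rw [bit_two_pow, if_neg (fun hc => hne hc.symm)]; simp
    rw [h2, mul_zero]
  · have h2 : Bb (2 ^ p) (π k) = 0 := by
      unfold Bb; rw [bit_two_pow, if_neg h1]; simp
    rw [h2, zero_mul]

lemma G2_ones {M : ℕ} (hM : 1 ≤ M) {π : ℕ → ℕ} (hmaps : ∀ k, k < M → π k < M) :
    G2 M π (2 ^ M - 1) = ((M - 1 : ℕ) : ZMod 2) := by
  unfold G2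
  have h1 : ∀ k ∈ Finset.range (M - 1), Bb (2^M - 1) (π k) * Bb (2^M - 1) (π (k+1)) = 1 := by
    intro k hk
    rw [Finset.mem_range] at hk
    unfold Bb
    rw [bit_pred_pow (hmaps k (by omega)), bit_pred_pow (hmaps (k+1) (by omega))]
    simp
  rw [Finset.sum_congr rfl h1, Finset.sum_const, Finset.card_range, nsmul_eq_mul, mul_one]

-- chi bracket lemmas
lemma chi_bracket (a b x y : ZMod 2) (h : x + y = 1) :
    χ a * χ b + χ (a + x) * χ (b + y) = 0 := by revert a b x y; decide

lemma chi_mul_self (x : ZMod 2) : χ x * χ x = 1 := by revert x; decide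

lemma Bb_compl {t k M : ℕ} (ht : t < 2 ^ M) (hk : k < M) :
    Bb (2 ^ M - 1 - t) k = 1 + Bb t k := by
  unfold Bb
  rw [bit_compl ht hk]
  rcases bit_cases t k with h | h <;> rw [h] <;> simp <;> decide

lemma cast_pred_M {M : ℕ} (hM : 1 ≤ M) :
    ((M - 1 : ℕ) : ZMod 2) = ((M : ℕ) : ZMod 2) + 1 := by
  obtain ⟨n, rfl⟩ : ∃ n, M = n + 1 := ⟨M - 1, by omega⟩
  simp only [Nat.add_sub_cancel]
  push_cast
  generalize ((n : ℕ) : ZMod 2) = x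
  revert x
  decide

-- ω-value lemmas
lemma omegaq_mul_conj {q : ℕ} (hq : 2 ≤ q) :
    omegaq q * (starRingEnd ℂ) (omegaq q) = 1 := by
  rw [Complex.mul_conj]
  have hq0 : (q : ℂ) ≠ 0 := Nat.cast_ne_zero.mpr (by omega)
  have harg : 2 * (Real.pi : ℂ) * Complex.I / q = ((2 * Real.pi / q : ℝ) : ℂ) * Complex.I := by
    push_cast
    field_simp
  have habs : ‖omegaq q‖ = 1 := by
    unfold omegaq
    rw [harg, Complex.norm_exp_ofReal_mul_I]
  rw [Complex.normSq_eq_norm_sq, habs]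
  norm_num

lemma omegaq_pow_half {q : ℕ} (hq : 2 ≤ q) (hq2 : 2 ∣ q) : omegaq q ^ (q / 2) = -1 := by
  unfold omegaq
  rw [← Complex.exp_nat_mul]
  have hq0 : (q : ℂ) ≠ 0 := Nat.cast_ne_zero.mpr (by omega)
  have hqq : ((q / 2 : ℕ) : ℂ) * 2 = (q : ℂ) := by
    rw [show ((q / 2 : ℕ) : ℂ) * 2 = (((q / 2) * 2 : ℕ) : ℂ) from by push_cast; ring,
      Nat.div_mul_cancel hq2]
  have h2 : ((q / 2 : ℕ) : ℂ) * (2 * Real.pi * Complex.I / q) = Real.pi * Complex.I := by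
    rw [mul_div_assoc', show ((q / 2 : ℕ) : ℂ) * (2 * Real.pi * Complex.I)
      = Real.pi * Complex.I * (((q / 2 : ℕ) : ℂ) * 2) from by ring, hqq,
      mul_div_assoc, div_self hq0, mul_one]
  rw [h2, Complex.exp_pi_mul_I]

lemma chi_pow (n : ℕ) : ((-1 : ℂ)) ^ n = ((χ ((n : ZMod 2)) : ℤ) : ℂ) := by
  rcases Nat.even_or_odd n with h | h
  · rw [h.neg_one_pow]
    have : ((n : ℕ) : ZMod 2) = 0 := (ZMod.natCast_eq_zero_iff n 2).mpr h.two_dvd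
    rw [this, χ_zero]
    norm_num
  · rw [h.neg_one_pow]
    have : ((n : ℕ) : ZMod 2) = 1 := by
      rw [← ZMod.natCast_mod, Nat.odd_iff.mp h]
      norm_num
    rw [this, χ_one]
    norm_num

lemma omegaq_pow_key {q : ℕ} (hq : 2 ≤ q) (hq2 : 2 ∣ q) (n c : ℕ) :
    omegaq q ^ (q / 2 * n + c) = ((χ ((n : ZMod 2)) : ℤ) : ℂ) * omegaq q ^ c := by
  rw [pow_add, pow_mul, omegaq_pow_half hq hq2, chi_pow]

-- tail-zone lemmas
section tail
variable {M : ℕ} {π : ℕ → ℕ} {τ : ℕ}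

lemma tail_facts (hM : 2 ≤ M) (hpM : π (M - 1) < M)
    (hτ1 : 2 ^ (M + 1) + 2 - (2 ^ (π (M - 1)) + 1) ≤ τ) (hτ2 : τ ≤ 2 ^ (M + 1) + 1)
    {i : ℕ} (hi : i < 2 ^ (M + 1) + 2 - τ) :
    i ≤ 2 ^ (π (M - 1)) ∧ 2 ^ (π (M - 1)) ≤ 2 ^ (M - 1) ∧ 2 ^ (M - 1) + 2 ^ (M - 1) = 2 ^ M
      ∧ 2 ^ M + 2 ^ M = 2 ^ (M + 1) := by
  have h1 : (2:ℕ) ^ (π (M - 1)) ≤ 2 ^ (M - 1) := Nat.pow_le_pow_right (by norm_num) (by omega)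
  have h2 : (2:ℕ) ^ (M - 1) + 2 ^ (M - 1) = 2 ^ M := by
    rw [← two_mul, ← pow_succ']; congr 1; omega
  have h3 : (2:ℕ) ^ M + 2 ^ M = 2 ^ (M + 1) := by rw [← two_mul, ← pow_succ']
  exact ⟨by omega, h1, h2, h3⟩

end tail

section tailmain
variable {M : ℕ} {π : ℕ → ℕ} {τ : ℕ}

lemma tail_part1 (hM : 2 ≤ M) (hπ : Set.BijOn π (Set.Iio M) (Set.Iio M))
    (hτ1 : 2 ^ (M + 1) + 2 - (2 ^ (π (M - 1)) + 1) ≤ τ) (hτ2 : τ ≤ 2 ^ (M + 1) + 1) :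
    ∑ i ∈ Finset.range (2 ^ (M + 1) + 2 - τ),
      (χ (KZ M π (i + (2 ^ M - 1))) * χ (KZ M π (i + (2 ^ M - 1) + τ))
        + χ (KZ' M π (i + (2 ^ M - 1))) * χ (KZ' M π (i + (2 ^ M - 1) + τ))) = 0 := by
  have hmaps : ∀ k, k < M → π k < M := fun k hk =>
    Set.mem_Iio.mp (hπ.mapsTo (Set.mem_Iio.mpr hk))
  have hpM : π (M - 1) < M := hmaps (M - 1) (by omega)
  apply Finset.sum_eq_zero
  intro i hi
  rw [Finset.mem_range] at hi
  obtain ⟨hip, hpm1, hm1m, hmm1⟩ := tail_facts hM hpM hτ1 hτ2 hi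
  have h1M : (1:ℕ) ≤ 2 ^ M := Nat.one_le_two_pow
  have h1p : (1:ℕ) ≤ 2 ^ (π (M - 1)) := Nat.one_le_two_pow
  by_cases hE : i + τ = 2 ^ (M + 1) + 1
  · -- right end is E
    rw [show i + (2 ^ M - 1) + τ = 2 ^ (M + 1) + 2 ^ M from by omega]
    rcases Nat.eq_zero_or_pos i with rfl | hi0
    · -- (F, E)
      rw [show 0 + (2 ^ M - 1) = 2 ^ M - 1 from by omega]
      rw [KZ_F hM hmaps, KZ'_F hM hmaps, KZ_E hM hmaps, KZ'_E hM hmaps]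
      decide
    · -- (X, E)
      obtain ⟨t, rfl⟩ : ∃ t, i = t + 1 := ⟨i - 1, by omega⟩
      have ht : t < 2 ^ M := by omega
      have htp : Bb t (π (M - 1)) = 0 := Bb_of_lt (by omega)
      rw [show t + 1 + (2 ^ M - 1) = 2 ^ M + t from by omega]
      rw [KZ_X hM hmaps ht, KZ'_X hM hmaps ht, KZ_E hM hmaps, KZ'_E hM hmaps, htp, add_zero]
      generalize G2 M π t = x
      revert x
      decide
  · -- right end is Y
    set u := i + τ - 2 ^ M - 1 with hu
    have hju : i + (2 ^ M - 1) + τ = 2 ^ (M + 1) + u := by omega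
    have hu1 : u < 2 ^ M := by omega
    have hu2 : 2 ^ M - 2 ^ (π (M - 1)) ≤ u := by omega
    have hup : Bb u (π (M - 1)) = 1 := Bb_eq_one (bit_high_one hpM hu2 hu1)
    rw [hju, KZ_Y hM hmaps hu1, KZ'_Y hM hmaps hu1, hup]
    rcases Nat.eq_zero_or_pos i with rfl | hi0
    · -- (F, Y)
      rw [show 0 + (2 ^ M - 1) = 2 ^ M - 1 from by omega]
      rw [KZ_F hM hmaps, KZ'_F hM hmaps]
      generalize G2 M π u + Bb u (π 0) + ((M : ℕ) : ZMod 2) = y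
      revert y
      decide
    · -- (X, Y)
      obtain ⟨t, rfl⟩ : ∃ t, i = t + 1 := ⟨i - 1, by omega⟩
      have ht : t < 2 ^ M := by omega
      have htp : Bb t (π (M - 1)) = 0 := Bb_of_lt (by omega)
      rw [show t + 1 + (2 ^ M - 1) = 2 ^ M + t from by omega]
      rw [KZ_X hM hmaps ht, KZ'_X hM hmaps ht, htp, add_zero]
      generalize G2 M π t = x
      generalize G2 M π u + Bb u (π 0) + ((M : ℕ) : ZMod 2) = y
      revert x y
      decide

lemma tail_part2 (hM : 2 ≤ M) (hπ : Set.BijOn π (Set.Iio M) (Set.Iio M))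
    (hτ1 : 2 ^ (M + 1) + 2 - (2 ^ (π (M - 1)) + 1) ≤ τ) (hτ2 : τ ≤ 2 ^ (M + 1) + 1) :
    ∑ i ∈ Finset.range (2 ^ (M + 1) + 2 - τ),
      (χ (KZ M π (i + (2 ^ M - 1))) * χ (KZ' M π (i + (2 ^ M - 1) + τ))
        + χ (KZ' M π (i + (2 ^ M - 1))) * χ (KZ M π (i + (2 ^ M - 1) + τ))) = 0 := by
  have hmaps : ∀ k, k < M → π k < M := fun k hk =>
    Set.mem_Iio.mp (hπ.mapsTo (Set.mem_Iio.mpr hk))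
  have hpM : π (M - 1) < M := hmaps (M - 1) (by omega)
  apply Finset.sum_eq_zero
  intro i hi
  rw [Finset.mem_range] at hi
  obtain ⟨hip, hpm1, hm1m, hmm1⟩ := tail_facts hM hpM hτ1 hτ2 hi
  have h1M : (1:ℕ) ≤ 2 ^ M := Nat.one_le_two_pow
  have h1p : (1:ℕ) ≤ 2 ^ (π (M - 1)) := Nat.one_le_two_pow
  by_cases hE : i + τ = 2 ^ (M + 1) + 1
  · rw [show i + (2 ^ M - 1) + τ = 2 ^ (M + 1) + 2 ^ M from by omega]
    rcases Nat.eq_zero_or_pos i with rfl | hi0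
    · rw [show 0 + (2 ^ M - 1) = 2 ^ M - 1 from by omega]
      rw [KZ_F hM hmaps, KZ'_F hM hmaps, KZ_E hM hmaps, KZ'_E hM hmaps]
      decide
    · obtain ⟨t, rfl⟩ : ∃ t, i = t + 1 := ⟨i - 1, by omega⟩
      have ht : t < 2 ^ M := by omega
      have htp : Bb t (π (M - 1)) = 0 := Bb_of_lt (by omega)
      rw [show t + 1 + (2 ^ M - 1) = 2 ^ M + t from by omega]
      rw [KZ_X hM hmaps ht, KZ'_X hM hmaps ht, KZ_E hM hmaps, KZ'_E hM hmaps, htp, add_zero]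
      generalize G2 M π t = x
      revert x
      decide
  · set u := i + τ - 2 ^ M - 1 with hu
    have hju : i + (2 ^ M - 1) + τ = 2 ^ (M + 1) + u := by omega
    have hu1 : u < 2 ^ M := by omega
    have hu2 : 2 ^ M - 2 ^ (π (M - 1)) ≤ u := by omega
    have hup : Bb u (π (M - 1)) = 1 := Bb_eq_one (bit_high_one hpM hu2 hu1)
    rw [hju, KZ_Y hM hmaps hu1, KZ'_Y hM hmaps hu1, hup]
    rcases Nat.eq_zero_or_pos i with rfl | hi0
    · rw [show 0 + (2 ^ M - 1) = 2 ^ M - 1 from by omega]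
      rw [KZ_F hM hmaps, KZ'_F hM hmaps]
      generalize G2 M π u + Bb u (π 0) + ((M : ℕ) : ZMod 2) = y
      revert y
      decide
    · obtain ⟨t, rfl⟩ : ∃ t, i = t + 1 := ⟨i - 1, by omega⟩
      have ht : t < 2 ^ M := by omega
      have htp : Bb t (π (M - 1)) = 0 := Bb_of_lt (by omega)
      rw [show t + 1 + (2 ^ M - 1) = 2 ^ M + t from by omega]
      rw [KZ_X hM hmaps ht, KZ'_X hM hmaps ht, htp, add_zero]
      generalize G2 M π t = x
      generalize G2 M π u + Bb u (π 0) + ((M : ℕ) : ZMod 2) = y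
      revert x y
      decide

end tailmain

def revp (M : ℕ) (π : ℕ → ℕ) : ℕ → ℕ := fun k => π (M - 1 - k)

lemma revp_zero (M : ℕ) (π : ℕ → ℕ) : revp M π 0 = π (M - 1) := by simp [revp]

lemma G2_revp {M : ℕ} (hM : 1 ≤ M) (π : ℕ → ℕ) (t : ℕ) :
    G2 M (revp M π) t = G2 M π t := G2_rev hM π t

lemma revp_bijOn {M : ℕ} (hM : 1 ≤ M) {π : ℕ → ℕ}
    (hπ : Set.BijOn π (Set.Iio M) (Set.Iio M)) :
    Set.BijOn (revp M π) (Set.Iio M) (Set.Iio M) := rev_bijOn hM hπ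

section headmain
variable {M : ℕ} {π : ℕ → ℕ} {τ : ℕ}

lemma head_part1 (hM : 2 ≤ M) (hπ : Set.BijOn π (Set.Iio M) (Set.Iio M))
    (hτ1 : 1 ≤ τ) (hτ2 : τ ≤ 2 ^ (π (M - 1)) + 1) :
    ∑ i ∈ Finset.range (2 ^ (M + 1) + 2 - τ),
      (χ (KZ M π (i + (2 ^ M - 1))) * χ (KZ M π (i + (2 ^ M - 1) + τ))
        + χ (KZ' M π (i + (2 ^ M - 1))) * χ (KZ' M π (i + (2 ^ M - 1) + τ))) = 0 := by
  have hmaps : ∀ k, k < M → π k < M := fun k hk =>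
    Set.mem_Iio.mp (hπ.mapsTo (Set.mem_Iio.mpr hk))
  have hinj : Set.InjOn π (Set.Iio M) := hπ.injOn
  have hpM : π (M - 1) < M := hmaps (M - 1) (by omega)
  have hpm1 : (2:ℕ) ^ (π (M - 1)) ≤ 2 ^ (M - 1) := Nat.pow_le_pow_right (by norm_num) (by omega)
  have hm1m : (2:ℕ) ^ (M - 1) + 2 ^ (M - 1) = 2 ^ M := by
    rw [← two_mul, ← pow_succ']; congr 1; omega
  have hmm1 : (2:ℕ) ^ M + 2 ^ M = 2 ^ (M + 1) := by rw [← two_mul, ← pow_succ']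
  have h2m1 : (2:ℕ) ≤ 2 ^ (M - 1) := by
    calc (2:ℕ) = 2 ^ 1 := by norm_num
    _ ≤ 2 ^ (M - 1) := Nat.pow_le_pow_right (by norm_num) (by omega)
  have h1p : (1:ℕ) ≤ 2 ^ (π (M - 1)) := Nat.one_le_two_pow
  have hτM : τ < 2 ^ M := by omega
  set p := π (M - 1) with hp
  set f : ℕ → ℤ := fun i =>
    χ (KZ M π (i + (2 ^ M - 1))) * χ (KZ M π (i + (2 ^ M - 1) + τ))
      + χ (KZ' M π (i + (2 ^ M - 1))) * χ (KZ' M π (i + (2 ^ M - 1) + τ)) with hf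
  -- split the sum into five chunks
  have e1 : ∀ (a b c : ℕ), a ≤ b → b ≤ c →
      ∑ i ∈ Finset.Ico a c, f i = ∑ i ∈ Finset.Ico a b, f i + ∑ i ∈ Finset.Ico b c, f i :=
    fun a b c hab hbc => (Finset.sum_Ico_consecutive f hab hbc).symm
  have hsplit : ∑ i ∈ Finset.range (2 ^ (M + 1) + 2 - τ), f i
      = f 0 + ((∑ k ∈ Finset.range (2 ^ M - τ), f (1 + k))
        + ((∑ k ∈ Finset.range τ, f (2 ^ M - τ + 1 + k))
        + ((∑ k ∈ Finset.range (2 ^ M - τ), f (2 ^ M + 1 + k))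
        + f (2 ^ (M + 1) + 1 - τ)))) := by
    rw [Finset.range_eq_Ico,
      e1 0 1 (2 ^ (M + 1) + 2 - τ) (by omega) (by omega),
      e1 1 (2 ^ M - τ + 1) (2 ^ (M + 1) + 2 - τ) (by omega) (by omega),
      e1 (2 ^ M - τ + 1) (2 ^ M + 1) (2 ^ (M + 1) + 2 - τ) (by omega) (by omega),
      e1 (2 ^ M + 1) (2 ^ (M + 1) + 1 - τ) (2 ^ (M + 1) + 2 - τ) (by omega) (by omega)]
    simp only [Finset.sum_Ico_eq_sum_range]
    rw [show (1:ℕ) - 0 = 1 from by omega,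
      show 2 ^ M - τ + 1 - 1 = 2 ^ M - τ from by omega,
      show 2 ^ M + 1 - (2 ^ M - τ + 1) = τ from by omega,
      show 2 ^ (M + 1) + 1 - τ - (2 ^ M + 1) = 2 ^ M - τ from by omega,
      show 2 ^ (M + 1) + 2 - τ - (2 ^ (M + 1) + 1 - τ) = 1 from by omega]
    rw [Finset.sum_range_one, Finset.sum_range_one]
    simp only [Nat.zero_add, zero_add, add_zero, Nat.sub_zero]
  rw [hsplit]
  -- the XX chunk vanishes by the Golay argument
  have hXX : ∑ k ∈ Finset.range (2 ^ M - τ), f (1 + k) = 0 := by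
    have hgl := golay hM (revp_bijOn (by omega) hπ) (fun _ => (1 : ZMod 2)) (fun _ => 0)
      (fun t j hj => by simp) τ hτ1
    rw [← hgl]
    apply Finset.sum_congr rfl
    intro k hk
    rw [Finset.mem_range] at hk
    have hk2 : k < 2 ^ M := by omega
    have hk3 : k + τ < 2 ^ M := by omega
    rw [hf]
    simp only
    rw [show 1 + k + (2 ^ M - 1) = 2 ^ M + k from by omega,
      show 2 ^ M + k + τ = 2 ^ M + (k + τ) from by omega,
      KZ_X hM hmaps hk2, KZ_X hM hmaps hk3, KZ'_X hM hmaps hk2, KZ'_X hM hmaps hk3,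
      G2_revp (by omega) π, G2_revp (by omega) π, revp_zero, ← hp]
    congr 1 <;> congr 1 <;> congr 1 <;> ring
  -- the YY chunk vanishes by the Golay argument
  have hYY : ∑ k ∈ Finset.range (2 ^ M - τ), f (2 ^ M + 1 + k) = 0 := by
    have hgl := golay hM (revp_bijOn (by omega) hπ)
      (fun t => Bb t (π 0) + ((M : ℕ) : ZMod 2))
      (fun j => if π 0 = j then 1 else 0)
      (fun t j hj => by
        show Bb (flip t j) (π 0) + ((M : ℕ) : ZMod 2)
          = Bb t (π 0) + ((M : ℕ) : ZMod 2) + (if π 0 = j then 1 else 0)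
        rw [Bb_flip]; ring) τ hτ1
    rw [← hgl]
    apply Finset.sum_congr rfl
    intro k hk
    rw [Finset.mem_range] at hk
    have hk2 : k < 2 ^ M := by omega
    have hk3 : k + τ < 2 ^ M := by omega
    rw [hf]
    simp only
    rw [show 2 ^ M + 1 + k + (2 ^ M - 1) = 2 ^ (M + 1) + k from by omega,
      show 2 ^ (M + 1) + k + τ = 2 ^ (M + 1) + (k + τ) from by omega,
      KZ_Y hM hmaps hk2, KZ_Y hM hmaps hk3, KZ'_Y hM hmaps hk2, KZ'_Y hM hmaps hk3,
      G2_revp (by omega) π, G2_revp (by omega) π, revp_zero, ← hp]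
    congr 1 <;> congr 1 <;> congr 1 <;> ring
  rw [hXX, hYY]
  -- remaining:  f 0 + (0 + (XY + (0 + f last))) = 0
  rcases Nat.lt_or_ge τ (2 ^ p + 1) with hA | hB
  · -- Case A : τ ≤ 2^p
    have hXY : ∑ k ∈ Finset.range τ, f (2 ^ M - τ + 1 + k) = 0 := by
      apply Finset.sum_eq_zero
      intro k hk
      rw [Finset.mem_range] at hk
      have ht1 : 2 ^ M - τ + k < 2 ^ M := by omega
      have htp : Bb (2 ^ M - τ + k) p = 1 :=
        Bb_eq_one (bit_high_one hpM (by omega) ht1)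
      have hkp : Bb k p = 0 := Bb_of_lt (by omega)
      rw [hf]
      simp only
      rw [show 2 ^ M - τ + 1 + k + (2 ^ M - 1) = 2 ^ M + (2 ^ M - τ + k) from by omega,
        show 2 ^ M + (2 ^ M - τ + k) + τ = 2 ^ (M + 1) + k from by omega,
        KZ_X hM hmaps ht1, KZ'_X hM hmaps ht1,
        KZ_Y hM hmaps (show k < 2 ^ M from by omega),
        KZ'_Y hM hmaps (show k < 2 ^ M from by omega), ← hp, htp, hkp]
      generalize G2 M π (2 ^ M - τ + k) = x
      generalize G2 M π k + Bb k (π 0) + ((M : ℕ) : ZMod 2) = y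
      revert x y
      decide
    rw [hXY]
    -- boundary terms cancel against each other
    have ht1 : τ - 1 < 2 ^ M := by omega
    have hBt' : Bb (τ - 1) p = 0 := Bb_of_lt (by omega)
    have hcompl : G2 M π (2 ^ M - τ) + Bb (2 ^ M - τ) (π 0) + ((M : ℕ) : ZMod 2)
        = G2 M π (τ - 1) := by
      rw [show 2 ^ M - τ = 2 ^ M - 1 - (τ - 1) from by omega,
        G2_compl hmaps (by omega) ht1, Bb_compl ht1 (hmaps 0 (by omega)),
        cast_pred_M (show 1 ≤ M from by omega), ← hp, hBt']
      generalize G2 M π (τ - 1) = x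
      generalize Bb (τ - 1) (π 0) = a
      generalize ((M : ℕ) : ZMod 2) = mm
      revert x a mm
      decide
    have hBu : Bb (2 ^ M - τ) p = 1 :=
      Bb_eq_one (bit_high_one hpM (by omega) (by omega))
    rw [hf]
    simp only
    rw [show 0 + (2 ^ M - 1) = 2 ^ M - 1 from by omega,
      show 2 ^ M - 1 + τ = 2 ^ M + (τ - 1) from by omega,
      show 2 ^ (M + 1) + 1 - τ + (2 ^ M - 1) = 2 ^ (M + 1) + (2 ^ M - τ) from by omega,
      show 2 ^ (M + 1) + (2 ^ M - τ) + τ = 2 ^ (M + 1) + 2 ^ M from by omega,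
      KZ_F hM hmaps, KZ'_F hM hmaps, KZ_E hM hmaps, KZ'_E hM hmaps,
      KZ_X hM hmaps ht1, KZ'_X hM hmaps ht1,
      KZ_Y hM hmaps (show 2 ^ M - τ < 2 ^ M from by omega),
      KZ'_Y hM hmaps (show 2 ^ M - τ < 2 ^ M from by omega), ← hp,
      hBt', hBu, hcompl]
    generalize G2 M π (τ - 1) = x
    revert x
    decide
  · -- Case B : τ = 2^p + 1
    have hτB : τ = 2 ^ p + 1 := by omega
    have hpm : (2:ℕ) ^ p < 2 ^ M := by omega
    have hp0 : π 0 ≠ p := by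
      intro hc
      have := hinj (Set.mem_Iio.mpr (show 0 < M from by omega))
        (Set.mem_Iio.mpr (show M - 1 < M from by omega)) (hp ▸ hc)
      omega
    have hB2p0 : Bb (2 ^ p) (π 0) = 0 := by
      unfold Bb; rw [bit_two_pow, if_neg hp0]; simp
    have hB2pp : Bb (2 ^ p) p = 1 := by
      unfold Bb; rw [bit_two_pow, if_pos rfl]; simp
    have hG2p : G2 M π (2 ^ p) = 0 := G2_two_pow hinj hmaps hpM
    have hGones : G2 M π (2 ^ M - 1) = ((M - 1 : ℕ) : ZMod 2) := G2_ones (by omega) hmaps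
    -- complement facts at  2^M - 1 - 2^p
    have hGc : G2 M π (2 ^ M - 1 - 2 ^ p)
        = ((M : ℕ) : ZMod 2) := by
      rw [G2_compl hmaps (by omega) hpm, hG2p, hB2p0, ← hp, hB2pp,
        cast_pred_M (show 1 ≤ M from by omega)]
      generalize ((M : ℕ) : ZMod 2) = mm
      revert mm
      decide
    have hBc0 : Bb (2 ^ M - 1 - 2 ^ p) (π 0) = 1 := by
      rw [Bb_compl hpm (hmaps 0 (by omega)), hB2p0]
      decide
    have hBcp : Bb (2 ^ M - 1 - 2 ^ p) p = 0 := by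
      rw [Bb_compl hpm hpM, hB2pp]
      decide
    -- the XY chunk: only k = 0 and k = 2^p survive
    -- the XY chunk: only k = 0 and k = 2^p survive
    have hXY : ∑ k ∈ Finset.range τ, f (2 ^ M - τ + 1 + k)
        = f (2 ^ M - (2 ^ p + 1) + 1 + 0) + f (2 ^ M - (2 ^ p + 1) + 1 + 2 ^ p) := by
      rw [hτB, Finset.sum_range_succ, Finset.range_eq_Ico,
        Finset.sum_eq_sum_Ico_succ_bot (show 0 < 2 ^ p from by omega)]
      have hmid : ∑ k ∈ Finset.Ico 1 (2 ^ p), f (2 ^ M - (2 ^ p + 1) + 1 + k) = 0 := by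
        apply Finset.sum_eq_zero
        intro k hk
        rw [Finset.mem_Ico] at hk
        have ht1 : 2 ^ M - 2 ^ p - 1 + k < 2 ^ M := by omega
        have htp : Bb (2 ^ M - 2 ^ p - 1 + k) p = 1 :=
          Bb_eq_one (bit_high_one hpM (by omega) ht1)
        have hkp : Bb k p = 0 := Bb_of_lt (by omega)
        rw [hf]
        simp only
        rw [hτB]
        rw [show 2 ^ M - (2 ^ p + 1) + 1 + k + (2 ^ M - 1)
            = 2 ^ M + (2 ^ M - 2 ^ p - 1 + k) from by omega,
          show 2 ^ M + (2 ^ M - 2 ^ p - 1 + k) + (2 ^ p + 1) = 2 ^ (M + 1) + k from by omega,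
          KZ_X hM hmaps ht1, KZ'_X hM hmaps ht1,
          KZ_Y hM hmaps (show k < 2 ^ M from by omega),
          KZ'_Y hM hmaps (show k < 2 ^ M from by omega), ← hp, htp, hkp]
        generalize G2 M π (2 ^ M - 2 ^ p - 1 + k) = x
        generalize G2 M π k + Bb k (π 0) + ((M : ℕ) : ZMod 2) = y
        revert x y
        decide
      rw [hmid]
      ring
    -- evaluate the four surviving boundary terms
    have hB00 : ∀ y : ℕ, Bb 0 y = 0 := fun y => Bb_of_lt (Nat.two_pow_pos _)
    have hBones : Bb (2 ^ M - 1) p = 1 := Bb_eq_one (bit_pred_pow hpM)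
    have hE0 : f 0 = χ 0 * χ (0 + 1) + χ 0 * χ (0 + 1 + 1) := by
      rw [hf]
      simp only
      rw [show 0 + (2 ^ M - 1) = 2 ^ M - 1 from by omega, hτB,
        show 2 ^ M - 1 + (2 ^ p + 1) = 2 ^ M + 2 ^ p from by omega,
        KZ_F hM hmaps, KZ'_F hM hmaps,
        KZ_X hM hmaps hpm, KZ'_X hM hmaps hpm, ← hp, hG2p, hB2pp]
    have hE1 : f (2 ^ M - (2 ^ p + 1) + 1 + 0)
        = χ (((M : ℕ) : ZMod 2) + 1) * χ (0 + 0 + ((M : ℕ) : ZMod 2))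
          + χ (((M : ℕ) : ZMod 2) + 0 + 1) * χ (0 + 0 + ((M : ℕ) : ZMod 2) + 0) := by
      rw [hf]
      simp only
      rw [hτB]
      rw [show 2 ^ M - (2 ^ p + 1) + 1 + 0 + (2 ^ M - 1)
          = 2 ^ M + (2 ^ M - 1 - 2 ^ p) from by omega,
        show 2 ^ M + (2 ^ M - 1 - 2 ^ p) + (2 ^ p + 1) = 2 ^ (M + 1) + 0 from by omega,
        KZ_X hM hmaps (show 2 ^ M - 1 - 2 ^ p < 2 ^ M from by omega),
        KZ'_X hM hmaps (show 2 ^ M - 1 - 2 ^ p < 2 ^ M from by omega),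
        KZ_Y hM hmaps (show 0 < 2 ^ M from by omega),
        KZ'_Y hM hmaps (show 0 < 2 ^ M from by omega), ← hp,
        hGc, hBcp, G2_zero, hB00, hB00]
    have hE2 : f (2 ^ M - (2 ^ p + 1) + 1 + 2 ^ p)
        = χ (((M - 1 : ℕ) : ZMod 2) + 1) * χ (0 + 0 + ((M : ℕ) : ZMod 2))
          + χ (((M - 1 : ℕ) : ZMod 2) + 1 + 1) * χ (0 + 0 + ((M : ℕ) : ZMod 2) + 1) := by
      rw [hf]
      simp only
      rw [hτB]
      rw [show 2 ^ M - (2 ^ p + 1) + 1 + 2 ^ p + (2 ^ M - 1)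
          = 2 ^ M + (2 ^ M - 1) from by omega,
        show 2 ^ M + (2 ^ M - 1) + (2 ^ p + 1) = 2 ^ (M + 1) + 2 ^ p from by omega,
        KZ_X hM hmaps (show 2 ^ M - 1 < 2 ^ M from by omega),
        KZ'_X hM hmaps (show 2 ^ M - 1 < 2 ^ M from by omega),
        KZ_Y hM hmaps hpm, KZ'_Y hM hmaps hpm, ← hp,
        hGones, hBones, hG2p, hB2p0, hB2pp]
    have hE3 : f (2 ^ (M + 1) + 1 - τ)
        = χ (((M : ℕ) : ZMod 2) + 1 + ((M : ℕ) : ZMod 2)) * χ 0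
          + χ (((M : ℕ) : ZMod 2) + 1 + ((M : ℕ) : ZMod 2) + 0) * χ 1 := by
      rw [hf]
      simp only
      rw [hτB]
      rw [show 2 ^ (M + 1) + 1 - (2 ^ p + 1) + (2 ^ M - 1)
          = 2 ^ (M + 1) + (2 ^ M - 1 - 2 ^ p) from by omega,
        show 2 ^ (M + 1) + (2 ^ M - 1 - 2 ^ p) + (2 ^ p + 1) = 2 ^ (M + 1) + 2 ^ M from by omega,
        KZ_Y hM hmaps (show 2 ^ M - 1 - 2 ^ p < 2 ^ M from by omega),
        KZ'_Y hM hmaps (show 2 ^ M - 1 - 2 ^ p < 2 ^ M from by omega),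
        KZ_E hM hmaps, KZ'_E hM hmaps, ← hp,
        hGc, hBc0, hBcp]
    rw [hXY, hE0, hE1, hE2, hE3, cast_pred_M (show 1 ≤ M from by omega)]
    generalize ((M : ℕ) : ZMod 2) = mm
    revert mm
    decide

end headmain

end CZ

open CZ

/-- Lemma 4, first part: the shifted pair
(Ψ_{2^{m−2}−1}(G₁+(q/2)x_{m−2}), Ψ_{2^{m−2}−1}(G₂+(q/2)x_{m−2})) is also a
(2^{m−1}+2, 2^{π(m−3)}+1)-CZCP. -/
theorem stmt_6 (q m c : ℕ) (hq : 2 ≤ q) (hq2 : 2 ∣ q) (hm : 4 ≤ m)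
    (π : ℕ → ℕ) (hπ : Set.BijOn π (Set.Iio (m - 2)) (Set.Iio (m - 2)))
    (g G G₁ G₂ : ℕ → ℕ)
    (hg : ∀ i, g i = ∑ k ∈ Finset.range (m - 3), bit i (π k) * bit i (π (k + 1)))
    (hG : ∀ i, G i = q / 2 * ((1 - bit i (m - 1)) * bit i (m - 2) * g i
        + bit i (m - 1) * (1 - bit i (m - 2)) * (g i + bit i (π 0) + (m - 2))) + c)
    (hG₁ : ∀ i, G₁ i = G i + q / 2 * (bit i (m - 1) * bit i (m - 2)))
    (hG₂ : ∀ i, G₂ i = G i + q / 2 * (bit i (π (m - 3)) * (bit i (m - 1) + bit i (m - 2))))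
    (cs ds : ℕ → ℂ)
    (hcs : ∀ i, cs i = omegaq q ^ (G₁ (i + (2 ^ (m - 2) - 1))
        + q / 2 * bit (i + (2 ^ (m - 2) - 1)) (m - 2)))
    (hds : ∀ i, ds i = omegaq q ^ (G₂ (i + (2 ^ (m - 2) - 1))
        + q / 2 * bit (i + (2 ^ (m - 2) - 1)) (m - 2))) :
    (∀ τ : ℕ, (1 ≤ τ ∧ τ ≤ 2 ^ π (m - 3) + 1) ∨
        (2 ^ (m - 1) + 2 - (2 ^ π (m - 3) + 1) ≤ τ ∧ τ ≤ 2 ^ (m - 1) + 1) →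
      acorr (2 ^ (m - 1) + 2) cs cs τ + acorr (2 ^ (m - 1) + 2) ds ds τ = 0) ∧
    (∀ τ : ℕ, 2 ^ (m - 1) + 2 - (2 ^ π (m - 3) + 1) ≤ τ → τ ≤ 2 ^ (m - 1) + 1 →
      acorr (2 ^ (m - 1) + 2) cs ds τ + acorr (2 ^ (m - 1) + 2) ds cs τ = 0) := by
  obtain ⟨M, rfl⟩ : ∃ M, m = M + 2 := ⟨m - 2, by omega⟩
  have hM : 2 ≤ M := by omega
  simp only [show M + 2 - 1 = M + 1 from rfl, show M + 2 - 2 = M from rfl,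
    show M + 2 - 3 = M - 1 from rfl] at hπ hg hG hG₁ hG₂ hcs hds ⊢
  -- exponent reduction
  have hKc : ∀ j, G₁ j + q / 2 * bit j M
      = q / 2 * (((1 - bit j (M + 1)) * bit j M * g j
        + bit j (M + 1) * (1 - bit j M) * (g j + bit j (π 0) + M))
        + (bit j (M + 1) * bit j M + bit j M)) + c := by
    intro j
    rw [hG₁ j, hG j]
    ring
  have hKc' : ∀ j, G₂ j + q / 2 * bit j M
      = q / 2 * (((1 - bit j (M + 1)) * bit j M * g j
        + bit j (M + 1) * (1 - bit j M) * (g j + bit j (π 0) + M))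
        + (bit j (π (M - 1)) * (bit j (M + 1) + bit j M) + bit j M)) + c := by
    intro j
    rw [hG₂ j, hG j]
    ring
  have hcastg : ∀ j, ((g j : ℕ) : ZMod 2) = G2 M π j := by
    intro j
    rw [hg j, Nat.cast_sum]
    unfold G2 Bb
    exact Finset.sum_congr rfl (fun k _ => by push_cast; ring)
  have hcast1 : ∀ j k, (((1 - bit j k : ℕ)) : ZMod 2) = 1 + Bb j k := by
    intro j k
    rcases bit_cases j k with h | h <;> rw [h] <;> simp [Bb, h] <;> decide
  have hcastK : ∀ j, ((((1 - bit j (M + 1)) * bit j M * g j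
      + bit j (M + 1) * (1 - bit j M) * (g j + bit j (π 0) + M))
      + (bit j (M + 1) * bit j M + bit j M) : ℕ) : ZMod 2) = KZ M π j := by
    intro j
    push_cast [hcast1, hcastg]
    unfold KZ Bb
    push_cast
    ring
  have hcastK' : ∀ j, ((((1 - bit j (M + 1)) * bit j M * g j
      + bit j (M + 1) * (1 - bit j M) * (g j + bit j (π 0) + M))
      + (bit j (π (M - 1)) * (bit j (M + 1) + bit j M) + bit j M) : ℕ) : ZMod 2) = KZ' M π j := by
    intro j
    push_cast [hcast1, hcastg]
    unfold KZ' Bb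
    push_cast
    ring
  have hcsv : ∀ i, cs i = ((χ (KZ M π (i + (2 ^ M - 1))) : ℤ) : ℂ) * omegaq q ^ c := by
    intro i
    rw [hcs i, hKc, omegaq_pow_key hq hq2, hcastK]
  have hdsv : ∀ i, ds i = ((χ (KZ' M π (i + (2 ^ M - 1))) : ℤ) : ℂ) * omegaq q ^ c := by
    intro i
    rw [hds i, hKc', omegaq_pow_key hq hq2, hcastK']
  have hconj := omegaq_mul_conj hq
  have hprod : ∀ a b : ZMod 2,
      (((χ a : ℤ) : ℂ) * omegaq q ^ c) * (starRingEnd ℂ) (((χ b : ℤ) : ℂ) * omegaq q ^ c)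
        = ((χ a * χ b : ℤ) : ℂ) := by
    intro a b
    rw [map_mul, map_pow, map_intCast]
    rw [show ((χ a : ℤ) : ℂ) * omegaq q ^ c * (((χ b : ℤ) : ℂ) * (starRingEnd ℂ) (omegaq q) ^ c)
      = (((χ a : ℤ) : ℂ) * ((χ b : ℤ) : ℂ))
        * ((omegaq q * (starRingEnd ℂ) (omegaq q)) ^ c) from by rw [mul_pow]; ring,
      hconj, one_pow, mul_one]
    push_cast
    ring
  have key : ∀ (x y : ℕ → ℂ) (X Y : ℕ → ZMod 2),
      (∀ i, x i = ((χ (X (i + (2 ^ M - 1))) : ℤ) : ℂ) * omegaq q ^ c) →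
      (∀ i, y i = ((χ (Y (i + (2 ^ M - 1))) : ℤ) : ℂ) * omegaq q ^ c) →
      ∀ τ : ℕ, acorr (2 ^ (M + 1) + 2) x y τ
        = ((∑ i ∈ Finset.range (2 ^ (M + 1) + 2 - τ),
            χ (X (i + (2 ^ M - 1))) * χ (Y (i + (2 ^ M - 1) + τ)) : ℤ) : ℂ) := by
    intro x y X Y hx hy τ
    unfold acorr
    rw [Int.cast_sum]
    apply Finset.sum_congr rfl
    intro i _
    rw [hx i, hy (i + τ), show i + τ + (2 ^ M - 1) = i + (2 ^ M - 1) + τ from by omega, hprod,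
      Int.cast_mul]
  constructor
  · intro τ hτ
    rw [key cs cs _ _ hcsv hcsv τ, key ds ds _ _ hdsv hdsv τ]
    have hz : (∑ i ∈ Finset.range (2 ^ (M + 1) + 2 - τ),
          χ (KZ M π (i + (2 ^ M - 1))) * χ (KZ M π (i + (2 ^ M - 1) + τ)))
        + (∑ i ∈ Finset.range (2 ^ (M + 1) + 2 - τ),
          χ (KZ' M π (i + (2 ^ M - 1))) * χ (KZ' M π (i + (2 ^ M - 1) + τ))) = 0 := by
      rw [← Finset.sum_add_distrib]
      rcases hτ with ⟨h1, h2⟩ | ⟨h1, h2⟩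
      · exact head_part1 hM hπ h1 h2
      · exact tail_part1 hM hπ h1 h2
    exact_mod_cast congrArg (fun z : ℤ => (z : ℂ)) hz
  · intro τ h1 h2
    rw [key cs ds _ _ hcsv hdsv τ, key ds cs _ _ hdsv hcsv τ]
    have hz : (∑ i ∈ Finset.range (2 ^ (M + 1) + 2 - τ),
          χ (KZ M π (i + (2 ^ M - 1))) * χ (KZ' M π (i + (2 ^ M - 1) + τ)))
        + (∑ i ∈ Finset.range (2 ^ (M + 1) + 2 - τ),
          χ (KZ' M π (i + (2 ^ M - 1))) * χ (KZ M π (i + (2 ^ M - 1) + τ))) = 0 := by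
      rw [← Finset.sum_add_distrib]
      exact tail_part2 hM hπ h1 h2
    exact_mod_cast congrArg (fun z : ℤ => (z : ℂ)) hz
end
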